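/- arXiv:1905.07934 — 6 statements merged into one kernel-verified Lean document; each statement's English description precedes it below -/
import Mathlib

section
/- Let 1 ≤ a < b ≤ ∞. Then ∫_a^b (log t)/(t(t-1)) dt ≤ ((b-a)/(ab)) · (2 + log a), where for b = ∞ the factor (b-a)/(ab) is interpreted as the limit 1/a. -/
open MeasureTheory Real Set

lemma aux_deriv {t : ℝ} (ht : 0 < t) :
    HasDerivAt (fun t => -(2 + Real.log t) / t) ((1 + Real.log t) / t ^ 2) t := by
  have h := (((hasDerivAt_const t (2:ℝ)).add (Real.hasDerivAt_log ht.ne')).neg).div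
    (hasDerivAt_id t) ht.ne'
  refine h.congr_deriv ?_
  simp only [id, Pi.add_apply, Pi.neg_apply]
  field_simp
  ring

lemma aux_tendsto : Filter.Tendsto (fun t : ℝ => -(2 + Real.log t) / t)
    Filter.atTop (nhds 0) := by
  have h1 : Filter.Tendsto (fun t : ℝ => Real.log t / t) Filter.atTop (nhds 0) := by
    have := Real.tendsto_pow_log_div_mul_add_atTop 1 0 1 one_ne_zero
    simpa using this
  have h2 : Filter.Tendsto (fun t : ℝ => 2 * t⁻¹) Filter.atTop (nhds 0) := by
    simpa using tendsto_inv_atTop_zero.const_mul (2:ℝ)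
  have h3 := (h2.add h1).neg
  simp only [neg_zero, add_zero] at h3
  refine h3.congr' ?_
  filter_upwards [Filter.eventually_ne_atTop (0:ℝ)] with t ht
  field_simp

lemma aux_bound {t : ℝ} (ht : 1 < t) :
    Real.log t / (t * (t - 1)) ≤ (1 + Real.log t) / t ^ 2 ∧
    0 ≤ Real.log t / (t * (t - 1)) := by
  have h0 : (0:ℝ) < t := by linarith
  have hl : Real.log t ≤ t - 1 := Real.log_le_sub_one_of_pos h0
  have hl0 : 0 ≤ Real.log t := Real.log_nonneg ht.le
  constructor
  · rw [div_le_div_iff₀ (by nlinarith) (by positivity)]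
    nlinarith
  · exact div_nonneg hl0 (by nlinarith)

/-- Lemma: ∫_a^b (log t)/(t(t-1)) dt ≤ ((b-a)/(ab))·(2 + log a) for 1 ≤ a < b ≤ ∞,
where the case b = ∞ is the second conjunct with limit factor 1/a. -/
theorem stmt0 (a : ℝ) (ha : 1 ≤ a) :
    (∀ b : ℝ, a < b →
      ∫ t in Ioc a b, Real.log t / (t * (t - 1)) ≤ (b - a) / (a * b) * (2 + Real.log a)) ∧
    (∫ t in Ioi a, Real.log t / (t * (t - 1)) ≤ (1 / a) * (2 + Real.log a)) := by
  have ha0 : (0:ℝ) < a := by linarith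
  have hmeas : ∀ s : Set ℝ, AEStronglyMeasurable (fun t => Real.log t / (t * (t - 1)))
      (volume.restrict s) := fun s =>
    (Real.measurable_log.div ((measurable_id.mul (measurable_id.sub measurable_const)))).aestronglyMeasurable
  constructor
  · intro b hab
    -- g integrable on Ioc a b
    have hgc : ContinuousOn (fun t : ℝ => (1 + Real.log t) / t ^ 2) (uIcc a b) := by
      apply ContinuousOn.div
      · exact continuousOn_const.add (Real.continuousOn_log.mono (fun t ht => by
          simp only [mem_compl_iff, mem_singleton_iff]
          have := ht.1
          rw [uIcc_of_le hab.le] at ht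
          have : 0 < t := lt_of_lt_of_le ha0 ht.1
          exact this.ne'))
      · fun_prop
      · intro t ht
        rw [uIcc_of_le hab.le] at ht
        have : 0 < t := lt_of_lt_of_le ha0 ht.1
        positivity
    have hgi : IntegrableOn (fun t : ℝ => (1 + Real.log t) / t ^ 2) (Ioc a b) := by
      have h : IntervalIntegrable (fun t : ℝ => (1 + Real.log t) / t ^ 2) volume a b :=
        hgc.intervalIntegrable
      rwa [intervalIntegrable_iff_integrableOn_Ioc_of_le hab.le] at h
    have hfi : IntegrableOn (fun t => Real.log t / (t * (t - 1))) (Ioc a b) := by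
      apply Integrable.mono' hgi (hmeas _)
      rw [ae_restrict_iff' measurableSet_Ioc]
      filter_upwards with t ht
      have ht1 : 1 < t := lt_of_le_of_lt ha ht.1
      rw [Real.norm_of_nonneg (aux_bound ht1).2]
      exact (aux_bound ht1).1
    have hmono : ∫ t in Ioc a b, Real.log t / (t * (t - 1)) ≤
        ∫ t in Ioc a b, (1 + Real.log t) / t ^ 2 := by
      apply setIntegral_mono_on hfi hgi measurableSet_Ioc
      intro t ht
      exact (aux_bound (lt_of_le_of_lt ha ht.1)).1
    have hval : ∫ t in Ioc a b, (1 + Real.log t) / t ^ 2 =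
        (-(2 + Real.log b) / b) - (-(2 + Real.log a) / a) := by
      rw [← intervalIntegral.integral_of_le hab.le]
      apply intervalIntegral.integral_eq_sub_of_hasDerivAt
      · intro t ht
        rw [uIcc_of_le hab.le] at ht
        exact aux_deriv (lt_of_lt_of_le ha0 ht.1)
      · rwa [intervalIntegrable_iff_integrableOn_Ioc_of_le hab.le]
    have hlog : Real.log a ≤ Real.log b := Real.log_le_log ha0 hab.le
    have hb0 : (0:ℝ) < b := lt_trans ha0 hab
    calc ∫ t in Ioc a b, Real.log t / (t * (t - 1))
        ≤ (-(2 + Real.log b) / b) - (-(2 + Real.log a) / a) := hmono.trans hval.le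
      _ ≤ (b - a) / (a * b) * (2 + Real.log a) := by
        have key : (b - a) / (a * b) * (2 + Real.log a) -
            ((-(2 + Real.log b) / b) - (-(2 + Real.log a) / a)) =
            (Real.log b - Real.log a) / b := by
          field_simp
          ring
        have h2 : 0 ≤ (Real.log b - Real.log a) / b :=
          div_nonneg (by linarith) hb0.le
        linarith
  · -- Ioi case
    set G : ℝ → ℝ := fun t => -(2 + Real.log t) / t with hG
    have hgc : ContinuousWithinAt G (Ici a) a :=
      (aux_deriv ha0).continuousAt.continuousWithinAt
    have hderiv : ∀ t ∈ Ioi a, HasDerivAt G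
        ((1 + Real.log t) / t ^ 2) t := fun t ht => aux_deriv (lt_trans ha0 ht)
    have hpos : ∀ t ∈ Ioi a, 0 ≤ (1 + Real.log t) / t ^ 2 := by
      intro t ht
      have ht1 : 1 < t := lt_of_le_of_lt ha ht
      have := Real.log_nonneg ht1.le
      positivity
    have hgi : IntegrableOn (fun t : ℝ => (1 + Real.log t) / t ^ 2) (Ioi a) :=
      integrableOn_Ioi_deriv_of_nonneg hgc hderiv hpos aux_tendsto
    have hval : ∫ t in Ioi a, (1 + Real.log t) / t ^ 2 = 0 - G a :=
      integral_Ioi_of_hasDerivAt_of_nonneg hgc hderiv hpos aux_tendsto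
    have hfi : IntegrableOn (fun t => Real.log t / (t * (t - 1))) (Ioi a) := by
      apply Integrable.mono' hgi (hmeas _)
      rw [ae_restrict_iff' measurableSet_Ioi]
      filter_upwards with t ht
      have ht1 : 1 < t := lt_of_le_of_lt ha ht
      rw [Real.norm_of_nonneg (aux_bound ht1).2]
      exact (aux_bound ht1).1
    have hmono : ∫ t in Ioi a, Real.log t / (t * (t - 1)) ≤
        ∫ t in Ioi a, (1 + Real.log t) / t ^ 2 := by
      apply setIntegral_mono_on hfi hgi measurableSet_Ioi
      intro t ht
      exact (aux_bound (lt_of_le_of_lt ha ht)).1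
    rw [hval] at hmono
    calc ∫ t in Ioi a, Real.log t / (t * (t - 1)) ≤ 0 - G a := hmono
      _ = (1 / a) * (2 + Real.log a) := by
        simp only [hG]
        field_simp
        ring
end

section
/- Let g : [0,∞) → [0,∞) be non-decreasing and unbounded. Then there exists a non-decreasing function h : [0,∞) → [0,∞) with h ≤ g eventually (i.e., h(x) ≤ g(x) for all sufficiently large x) such that the condition 'there exists C with h(x²) ≤ C·h(x) for all x' fails; in fact limsup_{x→∞} h(x²)/h(x) = ∞. -/
noncomputable def seq6 (g : ℝ → ℝ) (hunb : ∀ M : ℝ, ∃ x : ℝ, M < g x) : ℕ → ℝ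
  | 0 => max (Classical.choose (hunb ((2:ℝ)^(2^0)))) 1
  | (j+1) => max (max ((seq6 g hunb j)^2) (Classical.choose (hunb ((2:ℝ)^(2^(j+1))))))
      (seq6 g hunb j + 1)

section

variable (g : ℝ → ℝ) (hunb : ∀ M : ℝ, ∃ x : ℝ, M < g x)

lemma seq6_ge_one : ∀ j, 1 ≤ seq6 g hunb j
  | 0 => le_max_right _ _
  | (j+1) => le_trans (by linarith [seq6_ge_one j]) (le_max_right _ _)

lemma seq6_succ_ge (j : ℕ) : seq6 g hunb j + 1 ≤ seq6 g hunb (j+1) := le_max_right _ _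

lemma seq6_sq (j : ℕ) : (seq6 g hunb j)^2 ≤ seq6 g hunb (j+1) :=
  le_trans (le_max_left _ _) (le_max_left _ _)

lemma seq6_strictMono : StrictMono (seq6 g hunb) :=
  strictMono_nat_of_lt_succ fun j => lt_of_lt_of_le (by linarith) (seq6_succ_ge g hunb j)

lemma seq6_ge_nat : ∀ j : ℕ, (j:ℝ) + 1 ≤ seq6 g hunb j
  | 0 => by simpa using seq6_ge_one g hunb 0
  | (j+1) => by
    have := seq6_ge_nat j
    have := seq6_succ_ge g hunb j
    push_cast; linarith

lemma seq6_g (hmono : Monotone g) (j : ℕ) : (2:ℝ)^(2^j) < g (seq6 g hunb j) := by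
  have hc := Classical.choose_spec (hunb ((2:ℝ)^(2^j)))
  refine lt_of_lt_of_le hc (hmono ?_)
  cases j with
  | zero => exact le_max_left _ _
  | succ j => exact le_trans (le_max_right _ _) (le_max_left _ _)

open Classical in
noncomputable def hfun6 (x : ℝ) : ℝ :=
  if _ : {j : ℕ | seq6 g hunb j ≤ x}.Nonempty then
    (2:ℝ)^(2^(sSup {j : ℕ | seq6 g hunb j ≤ x})) else 0

lemma hfun6_bdd (x : ℝ) : BddAbove {j : ℕ | seq6 g hunb j ≤ x} := by
  refine ⟨Nat.floor x, fun j hj => Nat.le_floor ?_⟩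
  have := seq6_ge_nat g hunb j
  have : (j:ℝ) ≤ seq6 g hunb j := by linarith
  exact this.trans hj

lemma hfun6_nonneg (x : ℝ) : 0 ≤ hfun6 g hunb x := by
  unfold hfun6; split <;> positivity

lemma hfun6_eval {j : ℕ} {x : ℝ} (h1 : seq6 g hunb j ≤ x) (h2 : x < seq6 g hunb (j+1)) :
    hfun6 g hunb x = (2:ℝ)^(2^j) := by
  have hne : {k : ℕ | seq6 g hunb k ≤ x}.Nonempty := ⟨j, h1⟩
  have hsup : sSup {k : ℕ | seq6 g hunb k ≤ x} = j := by
    apply le_antisymm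
    · apply csSup_le hne
      intro k hk
      by_contra hkj
      push_neg at hkj
      have : seq6 g hunb (j+1) ≤ seq6 g hunb k := (seq6_strictMono g hunb).monotone hkj
      exact absurd (le_trans this hk) (not_le.mpr h2)
    · exact le_csSup (hfun6_bdd g hunb x) h1
  unfold hfun6
  rw [dif_pos hne, hsup]

lemma hfun6_mono : Monotone (hfun6 g hunb) := by
  intro a b hab
  unfold hfun6
  split
  · next hne =>
    have hne' : {j : ℕ | seq6 g hunb j ≤ b}.Nonempty :=
      hne.imp fun j hj => le_trans hj hab
    rw [dif_pos hne']
    have hsle : sSup {j : ℕ | seq6 g hunb j ≤ a} ≤ sSup {j : ℕ | seq6 g hunb j ≤ b} :=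
      csSup_le_csSup (hfun6_bdd g hunb b) hne (fun j hj => le_trans hj hab)
    exact pow_le_pow_right₀ one_le_two (Nat.pow_le_pow_right (by norm_num) hsle)
  · split <;> positivity

lemma hfun6_le_g (hmono : Monotone g) {x : ℝ} (hx : seq6 g hunb 0 ≤ x) :
    hfun6 g hunb x ≤ g x := by
  have hne : {j : ℕ | seq6 g hunb j ≤ x}.Nonempty := ⟨0, hx⟩
  have hmem := Nat.sSup_mem hne (hfun6_bdd g hunb x)
  unfold hfun6
  rw [dif_pos hne]
  exact le_trans (seq6_g g hunb hmono _).le (hmono hmem)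

end

theorem stmt6 (g : ℝ → ℝ) (hg0 : ∀ x, 0 ≤ g x) (hmono : Monotone g)
    (hunb : ∀ M : ℝ, ∃ x : ℝ, M < g x) :
    ∃ h : ℝ → ℝ, (∀ x, 0 ≤ h x) ∧ Monotone h ∧
      (∃ X : ℝ, ∀ x, X ≤ x → h x ≤ g x) ∧
      (∀ C M : ℝ, ∃ x : ℝ, M ≤ x ∧ 0 < h x ∧ C * h x < h (x ^ 2)) := by
  refine ⟨hfun6 g hunb, hfun6_nonneg g hunb, hfun6_mono g hunb,
    ⟨seq6 g hunb 0, fun x hx => hfun6_le_g g hunb hmono hx⟩, ?_⟩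
  intro C M
  obtain ⟨n, hn⟩ := exists_nat_gt (max C M)
  set s := seq6 g hunb
  have hs1 : ∀ j, 1 ≤ s j := seq6_ge_one g hunb
  have hCn : C < (n:ℝ) := lt_of_le_of_lt (le_max_left _ _) hn
  have hMn : M < (n:ℝ) := lt_of_le_of_lt (le_max_right _ _) hn
  refine ⟨Real.sqrt (s (n+1)), ?_, ?_, ?_⟩
  · -- M ≤ sqrt (s (n+1))
    have h1 : s n ≤ Real.sqrt (s (n+1)) := by
      have : (s n)^2 ≤ s (n+1) := seq6_sq g hunb n
      calc s n = Real.sqrt ((s n)^2) := (Real.sqrt_sq (by linarith [hs1 n])).symm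
        _ ≤ Real.sqrt (s (n+1)) := Real.sqrt_le_sqrt this
    have := seq6_ge_nat g hunb n
    linarith
  · -- 0 < h (sqrt (s (n+1)))
    have h1 : s n ≤ Real.sqrt (s (n+1)) := by
      have : (s n)^2 ≤ s (n+1) := seq6_sq g hunb n
      calc s n = Real.sqrt ((s n)^2) := (Real.sqrt_sq (by linarith [hs1 n])).symm
        _ ≤ Real.sqrt (s (n+1)) := Real.sqrt_le_sqrt this
    have h2 : Real.sqrt (s (n+1)) < s (n+1) := by
      have hge := seq6_succ_ge g hunb n
      have := hs1 n
      rw [Real.sqrt_lt' (by linarith)]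
      nlinarith
    rw [hfun6_eval g hunb h1 h2]
    positivity
  · -- C * h x < h (x^2)
    have h1 : s n ≤ Real.sqrt (s (n+1)) := by
      have : (s n)^2 ≤ s (n+1) := seq6_sq g hunb n
      calc s n = Real.sqrt ((s n)^2) := (Real.sqrt_sq (by linarith [hs1 n])).symm
        _ ≤ Real.sqrt (s (n+1)) := Real.sqrt_le_sqrt this
    have h2 : Real.sqrt (s (n+1)) < s (n+1) := by
      have hge := seq6_succ_ge g hunb n
      have := hs1 n
      rw [Real.sqrt_lt' (by linarith)]
      nlinarith
    have hsq : Real.sqrt (s (n+1)) ^ 2 = s (n+1) :=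
      Real.sq_sqrt (by linarith [hs1 (n+1)])
    rw [hfun6_eval g hunb h1 h2, hsq,
      hfun6_eval g hunb (le_refl (s (n+1))) ((seq6_strictMono g hunb) (Nat.lt_succ_self (n+1)))]
    have hC2 : C < (2:ℝ)^(2^n) := by
      have hn2 : (n:ℝ) < (2:ℝ)^n := by
        exact_mod_cast Nat.lt_two_pow_self (n := n)
      have h2n : (2:ℝ)^n ≤ (2:ℝ)^(2^n) :=
        pow_le_pow_right₀ one_le_two (Nat.le_of_lt (Nat.lt_two_pow_self (n := n)))
      linarith
    have hpow : (2:ℝ)^(2^(n+1)) = (2:ℝ)^(2^n) * (2:ℝ)^(2^n) := by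
      rw [← pow_add]
      congr 1
      ring
    rw [hpow]
    have hpos : (0:ℝ) < (2:ℝ)^(2^n) := by positivity
    exact mul_lt_mul_of_pos_right hC2 hpos
end

section
/- Let f(z) = exp(−(1+z)/(1−z)) on the unit disc 𝔻, and 0 < r < 1. Then ∫_{|z|<r} |f'(z)/f(z)| dm(z) = 2π·log(1/(1−r²)), where dm denotes planar Lebesgue measure. -/
open MeasureTheory Real Set Complex

lemma re_aux {w : ℂ} (hw : w ≠ 1) :
    ((1 + w) / (1 - w)).re = (1 - ‖w‖ ^ 2) / ‖1 - w‖ ^ 2 := by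
  have h : Complex.normSq (1 - w) ≠ 0 := by
    simpa [sub_eq_zero] using fun h => hw h.symm
  rw [Complex.div_re, Complex.sq_norm, Complex.sq_norm]
  simp only [Complex.normSq_apply, Complex.sub_re, Complex.sub_im, Complex.add_re,
    Complex.add_im, Complex.one_re, Complex.one_im]
  field_simp
  ring

lemma angular (s : ℝ) (hs0 : 0 < s) (hs1 : s < 1) :
    ∫ θ in (0:ℝ)..(2*π), (1:ℝ) / ‖1 - s * Complex.exp (θ * Complex.I)‖ ^ 2
      = 2 * π / (1 - s ^ 2) := by
  set h : ℂ → ℂ := fun w => (1 + w) / (1 - w) with hh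
  have hne : ∀ w : ℂ, ‖w‖ < 1 → (1 : ℂ) - w ≠ 0 := by
    intro w hw hc
    rw [sub_eq_zero] at hc
    simp [← hc] at hw
  have hmem : ∀ θ : ℝ, ‖(s : ℂ) * Complex.exp (θ * Complex.I)‖ < 1 := by
    intro θ
    simp [Complex.norm_exp, abs_of_pos hs0]
    exact hs1
  -- Cauchy integral formula
  have hdiff : DiffContOnCl ℂ h (Metric.ball 0 s) := by
    apply DifferentiableOn.diffContOnCl
    rw [closure_ball (0:ℂ) hs0.ne']
    intro w hw
    have hw1 : (1:ℂ) - w ≠ 0 := by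
      apply hne
      simp only [Metric.mem_closedBall, Complex.dist_eq, sub_zero] at hw
      linarith
    exact ((differentiableAt_const _).add differentiableAt_id).div
      ((differentiableAt_const _).sub differentiableAt_id) hw1 |>.differentiableWithinAt
  have hC := hdiff.circleIntegral_sub_inv_smul (w := 0) (by simpa using hs0)
  rw [circleIntegral] at hC
  simp only [deriv_circleMap, smul_eq_mul, sub_zero] at hC
  have hcm : ∀ θ : ℝ, circleMap 0 s θ = (s : ℂ) * Complex.exp (θ * Complex.I) := by
    intro θ; simp [circleMap]
  have hint : ∫ θ in (0:ℝ)..(2*π), h ((s:ℂ) * Complex.exp (θ * Complex.I)) = 2 * π := by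
    have h1 : ∀ θ : ℝ, circleMap 0 s θ * Complex.I * ((circleMap 0 s θ)⁻¹ * h (circleMap 0 s θ))
        = Complex.I * h ((s:ℂ) * Complex.exp (θ * Complex.I)) := by
      intro θ
      have hne0 : (s:ℂ) * Complex.exp (θ * Complex.I) ≠ 0 := by
        simp [Complex.exp_ne_zero, hs0.ne']
      rw [hcm]
      field_simp
      exact mul_div_cancel_left₀ _ (show (s:ℂ) ≠ 0 by exact_mod_cast hs0.ne')
    rw [intervalIntegral.integral_congr (g := fun θ => Complex.I * h ((s:ℂ) * Complex.exp (θ * Complex.I))) (fun θ _ => h1 θ)] at hC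
    rw [intervalIntegral.integral_const_mul] at hC
    have h0 : h 0 = 1 := by simp [hh]
    rw [h0] at hC
    have hI : (Complex.I : ℂ) ≠ 0 := Complex.I_ne_zero
    exact mul_left_cancel₀ hI (hC.trans (show (2*(π:ℂ)*Complex.I*1) = Complex.I * (2*π) by ring))
  -- take real parts
  have hcont : Continuous fun θ : ℝ => h ((s:ℂ) * Complex.exp (θ * Complex.I)) := by
    apply Continuous.div
    · continuity
    · continuity
    · intro θ
      exact hne _ (hmem θ)
  have hre : ∫ θ in (0:ℝ)..(2*π), (h ((s:ℂ) * Complex.exp (θ * Complex.I))).re = 2 * π := by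
    have := hint
    have heq : (∫ θ in (0:ℝ)..(2*π), h ((s:ℂ) * Complex.exp (θ * Complex.I))).re
        = ∫ θ in (0:ℝ)..(2*π), (h ((s:ℂ) * Complex.exp (θ * Complex.I))).re := by
      exact (Complex.reCLM.intervalIntegral_comp_comm (hcont.intervalIntegrable _ _)).symm
    rw [← heq, hint]
    simp
  have hptw : ∀ θ : ℝ, (h ((s:ℂ) * Complex.exp (θ * Complex.I))).re
      = (1 - s ^ 2) * ((1:ℝ) / ‖1 - s * Complex.exp (θ * Complex.I)‖ ^ 2) := by
    intro θ
    have hw1 : ((s:ℂ) * Complex.exp (θ * Complex.I)) ≠ 1 := by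
      intro hc
      have := hmem θ
      rw [hc] at this
      simp at this
    rw [hh]
    simp only
    rw [re_aux hw1]
    have habs : ‖(s:ℂ) * Complex.exp (θ * Complex.I)‖ = s := by
      simp [Complex.norm_exp, abs_of_pos hs0]
    rw [habs]
    ring
  have : ∫ θ in (0:ℝ)..(2*π), (1 - s ^ 2) * ((1:ℝ) / ‖1 - s * Complex.exp (θ * Complex.I)‖ ^ 2) = 2 * π := by
    rw [← intervalIntegral.integral_congr (fun θ _ => hptw θ)]
    exact hre
  rw [intervalIntegral.integral_const_mul] at this
  have hs2 : (1 : ℝ) - s ^ 2 ≠ 0 := by nlinarith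
  rw [eq_div_iff hs2, mul_comm]
  exact this

lemma angular' (s : ℝ) (hs0 : 0 < s) (hs1 : s < 1) :
    ∫ θ in Ioo (-π) π, (1:ℝ) / ‖1 - s * Complex.exp (θ * Complex.I)‖ ^ 2
      = 2 * π / (1 - s ^ 2) := by
  have hper : Function.Periodic
      (fun θ : ℝ => (1:ℝ) / ‖1 - s * Complex.exp (θ * Complex.I)‖ ^ 2) (2 * π) := by
    intro θ
    simp only
    congr 3
    push_cast
    rw [add_mul, Complex.exp_add]
    simp [Complex.exp_two_pi_mul_I]
  have h1 := hper.intervalIntegral_add_eq (-π) 0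
  have h2 : -π + 2 * π = π := by ring
  have h3 : (0:ℝ) + 2 * π = 2 * π := by ring
  rw [h2, h3] at h1
  rw [← integral_Ioc_eq_integral_Ioo, ← intervalIntegral.integral_of_le (by linarith [pi_pos] : -π ≤ π),
    h1, angular s hs0 hs1]

theorem stmt9 (r : ℝ) (hr0 : 0 < r) (hr1 : r < 1)
    (f : ℂ → ℂ) (hf : ∀ z, f z = Complex.exp (-(1 + z) / (1 - z))) :
    ∫ z in {z : ℂ | ‖z‖ < r}, ‖deriv f z / f z‖ =
      2 * π * Real.log (1 / (1 - r ^ 2)) := by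
  have hfeq : f = fun z => Complex.exp (-(1 + z) / (1 - z)) := funext hf
  set S : Set ℂ := {z : ℂ | ‖z‖ < r} with hS
  have hSopen : IsOpen S := isOpen_lt continuous_norm continuous_const
  have hSmeas : MeasurableSet S := hSopen.measurableSet
  -- pointwise formula for the integrand
  have hptw : ∀ z ∈ S, ‖deriv f z / f z‖ = 2 / ‖1 - z‖ ^ 2 := by
    intro z hz
    have hzr : ‖z‖ < r := hz
    have h1z : (1:ℂ) - z ≠ 0 := by
      intro hc
      rw [sub_eq_zero] at hc
      rw [← hc] at hzr
      simp at hzr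
      linarith
    have hg : HasDerivAt (fun z : ℂ => -(1 + z) / (1 - z)) (-2 / (1 - z) ^ 2) z := by
      have hu : HasDerivAt (fun z : ℂ => -(1 + z)) (-1) z := by
        exact (((hasDerivAt_id z).const_add 1).neg)
      have hv : HasDerivAt (fun z : ℂ => 1 - z) (-1) z := by
        simpa using ((hasDerivAt_id z).const_sub 1)
      have := hu.div hv h1z
      exact this.congr_deriv (by ring)
    have hF : HasDerivAt f (Complex.exp (-(1 + z) / (1 - z)) * (-2 / (1 - z) ^ 2)) z := by
      rw [hfeq]
      exact hg.cexp
    rw [hF.deriv, hf z, mul_comm, mul_div_assoc, div_self (Complex.exp_ne_zero _), mul_one]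
    rw [norm_div, norm_neg, norm_pow]
    norm_num
  rw [setIntegral_congr_fun hSmeas hptw]
  -- polar coordinates
  rw [← MeasureTheory.integral_indicator hSmeas,
    ← Complex.integral_comp_polarCoord_symm (f := S.indicator fun z => 2 / ‖1 - z‖ ^ 2)]
  set T : Set (ℝ × ℝ) := Ioo (0:ℝ) r ×ˢ Ioo (-π) π with hT
  have hTmeas : MeasurableSet T := measurableSet_Ioo.prod measurableSet_Ioo
  have hstep : ∀ p ∈ polarCoord.target,
      p.1 • (S.indicator fun z => 2 / ‖1 - z‖ ^ 2) (Complex.polarCoord.symm p)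
      = T.indicator (fun p : ℝ × ℝ =>
          p.1 * (2 / ‖1 - p.1 * Complex.exp (p.2 * Complex.I)‖ ^ 2)) p := by
    rintro ⟨s, θ⟩ hp
    rw [polarCoord_target] at hp
    obtain ⟨hs, hθ⟩ := hp
    have hs0 : (0:ℝ) < s := hs
    have hsymm : Complex.polarCoord.symm (s, θ) = (s:ℂ) * Complex.exp (θ * Complex.I) := by
      rw [Complex.polarCoord_symm_apply, Complex.exp_mul_I]
      push_cast
      ring
    have habs : ‖Complex.polarCoord.symm (s, θ)‖ = s := by
      rw [Complex.norm_polarCoord_symm, abs_of_pos hs0]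
    by_cases hsr : s < r
    · rw [Set.indicator_of_mem (by rw [hS, mem_setOf_eq, habs]; exact hsr),
        Set.indicator_of_mem (by exact ⟨⟨hs0, hsr⟩, hθ⟩), hsymm]
      simp [smul_eq_mul]
    · rw [Set.indicator_of_notMem (by rw [hS, mem_setOf_eq, habs]; exact hsr),
        Set.indicator_of_notMem (by rintro ⟨⟨_, h⟩, _⟩; exact hsr h)]
      simp
  rw [setIntegral_congr_fun polarCoord.open_target.measurableSet hstep,
    setIntegral_indicator hTmeas]
  have hTsub : polarCoord.target ∩ T = T := by
    apply inter_eq_self_of_subset_right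
    rintro ⟨s, θ⟩ ⟨⟨hs0, _⟩, hθ⟩
    exact ⟨hs0, hθ⟩
  rw [hTsub]
  -- integrability on the compact rectangle
  have hne : ∀ p : ℝ × ℝ, p ∈ Icc (0:ℝ) r ×ˢ Icc (-π) π →
      (1:ℂ) - p.1 * Complex.exp (p.2 * Complex.I) ≠ 0 := by
    rintro ⟨s, θ⟩ ⟨⟨hs0, hsr⟩, -⟩ hc
    rw [sub_eq_zero] at hc
    have habs1 : ‖(s:ℂ) * Complex.exp (θ * Complex.I)‖ = s := by
      rw [norm_mul, Complex.norm_exp, Complex.norm_real, Real.norm_eq_abs, _root_.abs_of_nonneg hs0]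
      simp
    rw [← hc] at habs1
    rename' habs1 => this
    simp at this
    linarith
  have hcont : ContinuousOn (fun p : ℝ × ℝ =>
      p.1 * (2 / ‖1 - p.1 * Complex.exp (p.2 * Complex.I)‖ ^ 2))
      (Icc (0:ℝ) r ×ˢ Icc (-π) π) := by
    apply ContinuousOn.mul continuousOn_fst
    apply ContinuousOn.div continuousOn_const
    · apply Continuous.continuousOn
      apply Continuous.pow
      apply continuous_norm.comp
      exact continuous_const.sub ((Complex.continuous_ofReal.comp continuous_fst).mul
        (Complex.continuous_exp.comp ((Complex.continuous_ofReal.comp continuous_snd).mul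
          continuous_const)))
    · intro p hp
      exact pow_ne_zero _ (norm_ne_zero_iff.mpr (hne p hp))
  have hIntOn : IntegrableOn (fun p : ℝ × ℝ =>
      p.1 * (2 / ‖1 - p.1 * Complex.exp (p.2 * Complex.I)‖ ^ 2)) T := by
    apply IntegrableOn.mono_set
      (hcont.integrableOn_compact (isCompact_Icc.prod isCompact_Icc))
    exact Set.prod_mono Ioo_subset_Icc_self Ioo_subset_Icc_self
  rw [Measure.volume_eq_prod] at hIntOn ⊢
  rw [setIntegral_prod _ hIntOn]
  -- inner integral
  have hinner : ∀ s ∈ Ioo (0:ℝ) r,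
      ∫ θ in Ioo (-π) π, s * (2 / ‖1 - s * Complex.exp (θ * Complex.I)‖ ^ 2)
        = 2 * π * (2 * s / (1 - s ^ 2)) := by
    rintro s ⟨hs0, hsr⟩
    have hs1 : s < 1 := hsr.trans hr1
    rw [MeasureTheory.integral_const_mul]
    simp_rw [div_eq_mul_one_div (2:ℝ)]
    rw [MeasureTheory.integral_const_mul, angular' s hs0 hs1]
    field_simp
  rw [setIntegral_congr_fun measurableSet_Ioo hinner]
  -- radial integral
  have hrad : ∫ s in Ioo (0:ℝ) r, 2 * π * (2 * s / (1 - s ^ 2))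
      = 2 * π * Real.log (1 / (1 - r ^ 2)) := by
    rw [← integral_Ioc_eq_integral_Ioo, ← intervalIntegral.integral_of_le hr0.le]
    have hF : ∀ s ∈ uIcc (0:ℝ) r, HasDerivAt (fun s : ℝ => -(2 * π) * Real.log (1 - s ^ 2))
        (2 * π * (2 * s / (1 - s ^ 2))) s := by
      intro s hs
      rw [uIcc_of_le hr0.le] at hs
      obtain ⟨hs0, hsr⟩ := hs
      have h1s : (1:ℝ) - s ^ 2 ≠ 0 := by
        have := hsr.trans_lt hr1
        exact ne_of_gt (by nlinarith)
      have hinner : HasDerivAt (fun s : ℝ => 1 - s ^ 2) (-(2 * s)) s := by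
        simpa using ((hasDerivAt_pow 2 s).const_sub 1)
      have := (Real.hasDerivAt_log h1s).comp s hinner
      have h2 := this.const_mul (-(2 * π))
      exact h2.congr_deriv (by ring)
    have hcont' : IntervalIntegrable (fun s : ℝ => 2 * π * (2 * s / (1 - s ^ 2))) volume 0 r := by
      apply ContinuousOn.intervalIntegrable
      apply ContinuousOn.mul continuousOn_const
      apply ContinuousOn.div (continuousOn_const.mul continuousOn_id)
        (continuousOn_const.sub (continuousOn_id.pow 2))
      intro t ht
      rw [uIcc_of_le hr0.le] at ht
      have := ht.2.trans_lt hr1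
      exact ne_of_gt (show (0:ℝ) < 1 - t ^ 2 by nlinarith [ht.1])
    rw [intervalIntegral.integral_eq_sub_of_hasDerivAt hF hcont']
    rw [one_div, Real.log_inv]
    simp
  rw [hrad]
end

section
/- Let 0 ≤ s₁ ≤ s₂ < 1 and let p, q > 0 with q > 1. Then ∫_0^{2π} dθ / (|1 − s₁e^{iθ}|^p · |1 − s₂e^{iθ}|^q) ≍ 1/((1−s₁)^p · (1−s₂)^{q−1}), where the comparison constants depend only on p and q. -/
open Real Complex

noncomputable def Aab (s θ : ℝ) : ℝ := ‖1 - s * Complex.exp (θ * Complex.I)‖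

lemma Aab_sq (s θ : ℝ) : Aab s θ ^ 2 = (1 - s)^2 + 2*s*(1 - Real.cos θ) := by
  rw [Aab, Complex.sq_norm, Complex.normSq_apply]
  simp only [Complex.sub_re, Complex.sub_im, Complex.one_re, Complex.one_im,
    Complex.mul_re, Complex.mul_im, Complex.ofReal_re, Complex.ofReal_im,
    Complex.exp_ofReal_mul_I_re, Complex.exp_ofReal_mul_I_im]
  have h := Real.sin_sq_add_cos_sq θ
  linear_combination s^2 * h

lemma Aab_nonneg (s θ : ℝ) : 0 ≤ Aab s θ := norm_nonneg _

lemma Aab_ge (s θ : ℝ) (hs0 : 0 ≤ s) : 1 - s ≤ Aab s θ := by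
  refine le_trans ?_ (Complex.re_le_norm _)
  simp only [Complex.sub_re, Complex.one_re, Complex.mul_re, Complex.ofReal_re,
    Complex.ofReal_im, Complex.exp_ofReal_mul_I_re, Complex.exp_ofReal_mul_I_im]
  nlinarith [Real.cos_le_one θ]

lemma le_of_sq_le_sq' {a b : ℝ} (h : a^2 ≤ b^2) (ha : 0 ≤ a) (hb : 0 ≤ b) : a ≤ b := by
  nlinarith

lemma Aab_le (s θ : ℝ) (hs0 : 0 ≤ s) (hs1 : s ≤ 1) (hθ : 0 ≤ θ) :
    Aab s θ ≤ (1 - s) + θ := by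
  refine le_of_sq_le_sq' ?_ (Aab_nonneg s θ) (by linarith)
  rw [Aab_sq]
  have h1 : 1 - θ^2/2 ≤ Real.cos θ := Real.one_sub_sq_div_two_le_cos
  nlinarith

lemma Aab_cont (s : ℝ) : Continuous (Aab s) :=
  continuous_norm.comp (continuous_const.sub (continuous_const.mul
    (Complex.continuous_exp.comp (Complex.continuous_ofReal.mul continuous_const))))

lemma Aab_quad (s θ : ℝ) (hs : 1/2 ≤ s) (hs1 : s ≤ 1) (h0 : 0 ≤ θ) (hπ : θ ≤ π) :
    ((1 - s) + θ) / (2 * π) ≤ Aab s θ := by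
  have hpi := Real.pi_gt_three
  refine le_of_sq_le_sq' ?_ (div_nonneg (by linarith) (by linarith)) (Aab_nonneg s θ)
  rw [Aab_sq, div_pow]
  have hcos : Real.cos θ ≤ 1 - 2/π^2 * θ^2 :=
    Real.cos_le_one_sub_mul_cos_sq (by rw [_root_.abs_of_nonneg h0]; exact hπ)
  rw [div_le_iff₀ (by positivity)]
  have hπ2 : (9:ℝ) ≤ π^2 := by nlinarith
  have hA : 0 ≤ 1 - Real.cos θ := by nlinarith [Real.cos_le_one θ]
  have h3 : 2 * θ^2 ≤ (1 - Real.cos θ) * π^2 := by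
    have he : (2/π^2) * θ^2 * π^2 = 2*θ^2 := by field_simp
    nlinarith [mul_le_mul_of_nonneg_right (by linarith : 2/π^2 * θ^2 ≤ 1 - Real.cos θ) (le_of_lt (by positivity : (0:ℝ) < π^2))]
  nlinarith [sq_nonneg ((1-s) - θ), mul_nonneg (by linarith : (0:ℝ) ≤ π^2 - 9) (sq_nonneg (1-s)),
    mul_nonneg (by linarith : (0:ℝ) ≤ s - 1/2) (mul_nonneg (by positivity : (0:ℝ) ≤ π^2) hA)]

lemma Aab_reflect (s θ : ℝ) : Aab s (2*π - θ) = Aab s θ := by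
  have h : Aab s (2*π - θ) ^ 2 = Aab s θ ^ 2 := by
    rw [Aab_sq, Aab_sq, Real.cos_two_pi_sub]
  have h1 := Aab_nonneg s (2*π - θ)
  have h2 := Aab_nonneg s θ
  nlinarith

lemma key_int (q d : ℝ) (hq : 1 < q) (hd : 0 < d) :
    ∫ θ in (0:ℝ)..π, (d + θ) ^ (-q) ≤ d ^ (-q+1) / (q - 1) := by
  have hpi := Real.pi_pos
  rw [intervalIntegral.integral_comp_add_left (fun x => x ^ (-q)) d]
  rw [integral_rpow (Or.inr ⟨by linarith, Set.notMem_uIcc_of_lt (by linarith) (by linarith)⟩)]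
  have h1 : (0:ℝ) ≤ (d + π) ^ (-q+1) := Real.rpow_nonneg (by linarith) _
  have h2 : d + 0 = d := by ring
  rw [h2]
  have h3 : ((d + π) ^ (-q+1) - d ^ (-q+1)) / (-q + 1) =
      (d ^ (-q+1) - (d + π) ^ (-q+1)) / (q - 1) := by
    rw [div_eq_div_iff (by linarith) (by linarith)]; ring
  rw [h3]
  gcongr
  · linarith

lemma G_cont (s q : ℝ) (hq : 0 < q) (h0 : 0 ≤ s) (h1 : s < 1) :
    Continuous (fun θ => 1 / Aab s θ ^ q) := by
  apply continuous_const.div ((Aab_cont s).rpow_const fun θ => Or.inr hq.le)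
  intro θ
  exact (Real.rpow_pos_of_pos (lt_of_lt_of_le (by linarith) (Aab_ge s θ h0)) q).ne'

lemma F_cont (s₁ s₂ p q : ℝ) (hp : 0 < p) (hq : 0 < q) (h₁0 : 0 ≤ s₁) (h₁1 : s₁ < 1)
    (h₂0 : 0 ≤ s₂) (h₂1 : s₂ < 1) :
    Continuous (fun θ => 1 / (Aab s₁ θ ^ p * Aab s₂ θ ^ q)) := by
  apply continuous_const.div
    (((Aab_cont s₁).rpow_const fun θ => Or.inr hp.le).mul
      ((Aab_cont s₂).rpow_const fun θ => Or.inr hq.le))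
  intro θ
  have a1 : 0 < Aab s₁ θ := lt_of_lt_of_le (by linarith) (Aab_ge s₁ θ h₁0)
  have a2 : 0 < Aab s₂ θ := lt_of_lt_of_le (by linarith) (Aab_ge s₂ θ h₂0)
  exact (mul_pos (Real.rpow_pos_of_pos a1 p) (Real.rpow_pos_of_pos a2 q)).ne'

theorem stmt12 (p q : ℝ) (hp : 0 < p) (hq : 1 < q) :
    ∃ c C : ℝ, 0 < c ∧ 0 < C ∧ ∀ s₁ s₂ : ℝ, 0 ≤ s₁ → s₁ ≤ s₂ → s₂ < 1 →
      c * (1 / ((1 - s₁) ^ p * (1 - s₂) ^ (q - 1))) ≤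
        (∫ θ in (0:ℝ)..(2 * π),
          1 / (‖1 - s₁ * Complex.exp (θ * Complex.I)‖ ^ p *
               ‖1 - s₂ * Complex.exp (θ * Complex.I)‖ ^ q)) ∧
      (∫ θ in (0:ℝ)..(2 * π),
          1 / (‖1 - s₁ * Complex.exp (θ * Complex.I)‖ ^ p *
               ‖1 - s₂ * Complex.exp (θ * Complex.I)‖ ^ q)) ≤
        C * (1 / ((1 - s₁) ^ p * (1 - s₂) ^ (q - 1))) := by
  have hq0 : 0 < q := by linarith
  have hq1 : 0 < q - 1 := by linarith
  have hpi := Real.pi_gt_three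
  have hpi0 : 0 < π := by linarith
  refine ⟨1 / ((2:ℝ) ^ p * (2:ℝ) ^ q), 4 * π + 2 * (2*π) ^ q / (q - 1), ?_, ?_, ?_⟩
  · have := Real.rpow_pos_of_pos (by norm_num : (0:ℝ) < 2) p
    have := Real.rpow_pos_of_pos (by norm_num : (0:ℝ) < 2) q
    positivity
  · have := Real.rpow_pos_of_pos (by positivity : (0:ℝ) < 2*π) q
    positivity
  intro s₁ s₂ hs₁ h12 hs₂
  have hs₂0 : 0 ≤ s₂ := le_trans hs₁ h12
  have hs₁1 : s₁ < 1 := lt_of_le_of_lt h12 hs₂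
  have hd₂ : 0 < 1 - s₂ := by linarith
  have hd₁ : 0 < 1 - s₁ := by linarith
  have h21 : 1 - s₂ ≤ 1 - s₁ := by linarith
  have hshow : (∫ θ in (0:ℝ)..(2 * π),
          1 / (‖1 - s₁ * Complex.exp (θ * Complex.I)‖ ^ p *
               ‖1 - s₂ * Complex.exp (θ * Complex.I)‖ ^ q)) =
      ∫ θ in (0:ℝ)..(2 * π), 1 / (Aab s₁ θ ^ p * Aab s₂ θ ^ q) := rfl
  rw [hshow]
  have hFc := F_cont s₁ s₂ p q hp hq0 hs₁ hs₁1 hs₂0 hs₂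
  have hGc := G_cont s₂ q hq0 hs₂0 hs₂
  -- positivity facts
  have hd1p : (0:ℝ) < (1 - s₁) ^ p := Real.rpow_pos_of_pos hd₁ p
  have hd2q : (0:ℝ) < (1 - s₂) ^ q := Real.rpow_pos_of_pos hd₂ q
  have hd2q1 : (0:ℝ) < (1 - s₂) ^ (q - 1) := Real.rpow_pos_of_pos hd₂ (q-1)
  have h2p : (0:ℝ) < (2:ℝ) ^ p := Real.rpow_pos_of_pos (by norm_num) p
  have h2q : (0:ℝ) < (2:ℝ) ^ q := Real.rpow_pos_of_pos (by norm_num) q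
  have hApos : ∀ s θ, 0 ≤ s → s < 1 → 0 < Aab s θ :=
    fun s θ h0 h1 => lt_of_lt_of_le (by linarith) (Aab_ge s θ h0)
  have hFnonneg : ∀ θ, 0 ≤ 1 / (Aab s₁ θ ^ p * Aab s₂ θ ^ q) := by
    intro θ
    have := Real.rpow_nonneg (Aab_nonneg s₁ θ) p
    have := Real.rpow_nonneg (Aab_nonneg s₂ θ) q
    positivity
  constructor
  · -- lower bound
    have hstep1 : (1 - s₂) * (1/((2*(1-s₁))^p * (2*(1-s₂))^q)) ≤
        ∫ θ in (0:ℝ)..(1-s₂), 1 / (Aab s₁ θ ^ p * Aab s₂ θ ^ q) := by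
      have hconst : (∫ _θ in (0:ℝ)..(1-s₂), (1/((2*(1-s₁))^p * (2*(1-s₂))^q) : ℝ)) =
          (1 - s₂) * (1/((2*(1-s₁))^p * (2*(1-s₂))^q)) := by
        rw [intervalIntegral.integral_const, smul_eq_mul, sub_zero]
      rw [← hconst]
      apply intervalIntegral.integral_mono_on hd₂.le
        (intervalIntegrable_const) (hFc.intervalIntegrable _ _)
      intro θ hθ
      obtain ⟨h0, h1⟩ := hθ
      have ha1 : Aab s₁ θ ≤ 2*(1-s₁) := le_trans (Aab_le s₁ θ hs₁ hs₁1.le h0) (by linarith)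
      have ha2 : Aab s₂ θ ≤ 2*(1-s₂) := le_trans (Aab_le s₂ θ hs₂0 hs₂.le h0) (by linarith)
      have hp1 : Aab s₁ θ^p ≤ (2*(1-s₁))^p := Real.rpow_le_rpow (Aab_nonneg _ _) ha1 hp.le
      have hp2 : Aab s₂ θ^q ≤ (2*(1-s₂))^q := Real.rpow_le_rpow (Aab_nonneg _ _) ha2 hq0.le
      have hpos1 : 0 < Aab s₁ θ^p := Real.rpow_pos_of_pos (hApos s₁ θ hs₁ hs₁1) _
      have hpos2 : 0 < Aab s₂ θ^q := Real.rpow_pos_of_pos (hApos s₂ θ hs₂0 hs₂) _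
      apply one_div_le_one_div_of_le (by positivity)
      exact mul_le_mul hp1 hp2 hpos2.le (by positivity)
    have hstep2 : (∫ θ in (0:ℝ)..(1-s₂), 1 / (Aab s₁ θ ^ p * Aab s₂ θ ^ q)) ≤
        ∫ θ in (0:ℝ)..(2*π), 1 / (Aab s₁ θ ^ p * Aab s₂ θ ^ q) := by
      apply intervalIntegral.integral_mono_interval le_rfl hd₂.le (by linarith)
        (Filter.Eventually.of_forall fun θ => hFnonneg θ) (hFc.intervalIntegrable _ _)
    refine le_trans (le_of_eq ?_) (le_trans hstep1 hstep2)
    rw [Real.mul_rpow (by norm_num) hd₁.le, Real.mul_rpow (by norm_num) hd₂.le,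
      Real.rpow_sub hd₂ q 1, Real.rpow_one]
    field_simp
    repeat exact Or.inl trivial
  · -- upper bound
    have hC1 : 4*π ≤ 4 * π + 2 * (2*π) ^ q / (q - 1) := by
      have := Real.rpow_pos_of_pos (by positivity : (0:ℝ) < 2*π) q
      have : 0 < 2 * (2*π) ^ q / (q - 1) := by positivity
      linarith
    have hC2 : 2 * (2*π) ^ q / (q - 1) ≤ 4 * π + 2 * (2*π) ^ q / (q - 1) := by
      have : (0:ℝ) ≤ 4 * π := by positivity
      linarith
    have hd2split : (1 - s₂) ^ q = (1 - s₂) ^ (q-1) * (1 - s₂) := by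
      rw [← Real.rpow_add_one hd₂.ne' (q-1)]; norm_num
    rcases lt_or_ge s₂ (1/2 : ℝ) with hhalf | hhalf
    · -- s₂ < 1/2 : crude bound
      have hbd : ∀ θ ∈ Set.Icc (0:ℝ) (2*π), 1 / (Aab s₁ θ ^ p * Aab s₂ θ ^ q) ≤
          1 / ((1-s₁)^p * (1-s₂)^q) := by
        intro θ _
        have hp1 : (1-s₁)^p ≤ Aab s₁ θ^p :=
          Real.rpow_le_rpow hd₁.le (Aab_ge s₁ θ hs₁) hp.le
        have hp2 : (1-s₂)^q ≤ Aab s₂ θ^q :=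
          Real.rpow_le_rpow hd₂.le (Aab_ge s₂ θ hs₂0) hq0.le
        apply one_div_le_one_div_of_le (by positivity)
        exact mul_le_mul hp1 hp2 hd2q.le (Real.rpow_nonneg (Aab_nonneg _ _) p)
      have hmono : (∫ θ in (0:ℝ)..(2*π), 1 / (Aab s₁ θ ^ p * Aab s₂ θ ^ q)) ≤
          (2*π) * (1 / ((1-s₁)^p * (1-s₂)^q)) := by
        have hconst : (∫ _θ in (0:ℝ)..(2*π), (1 / ((1-s₁)^p * (1-s₂)^q) : ℝ)) =
            (2*π) * (1 / ((1-s₁)^p * (1-s₂)^q)) := by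
          rw [intervalIntegral.integral_const, smul_eq_mul, sub_zero]
        rw [← hconst]
        exact intervalIntegral.integral_mono_on (by positivity)
          (hFc.intervalIntegrable _ _) intervalIntegrable_const hbd
      refine hmono.trans ?_
      rw [hd2split, mul_one_div, mul_one_div,
        div_le_div_iff₀ (by positivity) (by positivity)]
      have hstep : 2*π ≤ (4*π + 2*(2*π)^q/(q-1)) * (1-s₂) := by
        nlinarith [hC1, hhalf, hpi0]
      nlinarith [mul_nonneg (by linarith [hstep] :
          (0:ℝ) ≤ (4*π + 2*(2*π)^q/(q-1))*(1-s₂) - 2*π)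
        (le_of_lt (mul_pos hd1p hd2q1))]
    · -- 1/2 ≤ s₂ : fine analysis
      have h2πq : (0:ℝ) < (2*π)^q := Real.rpow_pos_of_pos (by positivity) q
      have hGq : ∀ θ, 0 < Aab s₂ θ ^ q :=
        fun θ => Real.rpow_pos_of_pos (hApos s₂ θ hs₂0 hs₂) q
      have hstepA : (∫ θ in (0:ℝ)..(2*π), 1 / (Aab s₁ θ^p * Aab s₂ θ^q)) ≤
          (1/(1-s₁)^p) * ∫ θ in (0:ℝ)..(2*π), 1 / Aab s₂ θ^q := by
        rw [← intervalIntegral.integral_const_mul]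
        apply intervalIntegral.integral_mono_on (by positivity)
          (hFc.intervalIntegrable _ _) ((continuous_const.mul hGc).intervalIntegrable _ _)
        intro θ _
        have hp1 : (1-s₁)^p ≤ Aab s₁ θ^p := Real.rpow_le_rpow hd₁.le (Aab_ge s₁ θ hs₁) hp.le
        simp only [Pi.mul_apply]
        rw [div_mul_div_comm, one_mul]
        apply one_div_le_one_div_of_le (mul_pos hd1p (hGq θ))
        exact mul_le_mul_of_nonneg_right hp1 (hGq θ).le
      have hptw1 : ∀ θ ∈ Set.Icc (0:ℝ) π, 1 / Aab s₂ θ^q ≤ (2*π)^q * ((1-s₂) + θ)^(-q) := by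
        intro θ hθ
        obtain ⟨h0, h1⟩ := hθ
        have hb : 0 < (1-s₂) + θ := by linarith
        have hAq : ((1-s₂)+θ)^q / (2*π)^q ≤ Aab s₂ θ^q := by
          rw [← Real.div_rpow hb.le (by positivity)]
          exact Real.rpow_le_rpow (by positivity) (Aab_quad s₂ θ hhalf hs₂.le h0 h1) hq0.le
        calc 1 / Aab s₂ θ^q ≤ 1 / (((1-s₂)+θ)^q / (2*π)^q) :=
              one_div_le_one_div_of_le (div_pos (Real.rpow_pos_of_pos hb q) h2πq) hAq
          _ = (2*π)^q * ((1-s₂)+θ)^(-q) := by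
              rw [one_div_div, Real.rpow_neg hb.le, div_eq_mul_inv]
      have hptw2 : ∀ θ ∈ Set.Icc π (2*π), 1 / Aab s₂ θ^q ≤
          (2*π)^q * ((1-s₂) + (2*π - θ))^(-q) := by
        intro θ hθ
        obtain ⟨h0, h1⟩ := hθ
        have hb : 0 < (1-s₂) + (2*π - θ) := by linarith
        have hrefl : Aab s₂ θ = Aab s₂ (2*π - θ) := by
          have h := Aab_reflect s₂ (2*π - θ)
          rw [show 2*π - (2*π - θ) = θ by ring] at h
          exact h
        have hAq : ((1-s₂)+(2*π-θ))^q / (2*π)^q ≤ Aab s₂ θ^q := by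
          rw [hrefl, ← Real.div_rpow hb.le (by positivity)]
          exact Real.rpow_le_rpow (by positivity)
            (Aab_quad s₂ (2*π-θ) hhalf hs₂.le (by linarith) (by linarith)) hq0.le
        calc 1 / Aab s₂ θ^q ≤ 1 / (((1-s₂)+(2*π-θ))^q / (2*π)^q) :=
              one_div_le_one_div_of_le (div_pos (Real.rpow_pos_of_pos hb q) h2πq) hAq
          _ = (2*π)^q * ((1-s₂)+(2*π-θ))^(-q) := by
              rw [one_div_div, Real.rpow_neg hb.le, div_eq_mul_inv]
      have hH1c : ContinuousOn (fun θ : ℝ => (2*π)^q * ((1-s₂) + θ)^(-q)) (Set.uIcc 0 π) := by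
        apply continuousOn_const.mul
        apply ContinuousOn.rpow_const (continuousOn_const.add continuousOn_id)
        intro θ hθ
        rw [Set.uIcc_of_le hpi0.le] at hθ
        have : 0 < (1-s₂) + θ := by have := hθ.1; linarith
        exact Or.inl this.ne'
      have hH2c : ContinuousOn (fun θ : ℝ => (2*π)^q * ((1-s₂) + (2*π - θ))^(-q))
          (Set.uIcc π (2*π)) := by
        apply continuousOn_const.mul
        apply ContinuousOn.rpow_const
          (continuousOn_const.add (continuousOn_const.sub continuousOn_id))
        intro θ hθ
        rw [Set.uIcc_of_le (by linarith)] at hθ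
        have : 0 < (1-s₂) + (2*π - θ) := by have := hθ.2; linarith
        exact Or.inl this.ne'
      have hGi1 : IntervalIntegrable (fun θ => 1 / Aab s₂ θ^q) MeasureTheory.volume 0 π :=
        hGc.intervalIntegrable _ _
      have hGi2 : IntervalIntegrable (fun θ => 1 / Aab s₂ θ^q) MeasureTheory.volume π (2*π) :=
        hGc.intervalIntegrable _ _
      have hH1i : IntervalIntegrable (fun θ : ℝ => (2*π)^q * ((1-s₂) + θ)^(-q))
          MeasureTheory.volume 0 π := hH1c.intervalIntegrable
      have hH2i : IntervalIntegrable (fun θ : ℝ => (2*π)^q * ((1-s₂) + (2*π - θ))^(-q))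
          MeasureTheory.volume π (2*π) := hH2c.intervalIntegrable
      have hsplit : (∫ θ in (0:ℝ)..(2*π), 1 / Aab s₂ θ^q) =
          (∫ θ in (0:ℝ)..π, 1 / Aab s₂ θ^q) + ∫ θ in π..(2*π), 1 / Aab s₂ θ^q :=
        (intervalIntegral.integral_add_adjacent_intervals hGi1 hGi2).symm
      have hB1 : (∫ θ in (0:ℝ)..π, 1 / Aab s₂ θ^q) ≤
          ∫ θ in (0:ℝ)..π, (2*π)^q * ((1-s₂)+θ)^(-q) :=
        intervalIntegral.integral_mono_on hpi0.le hGi1 hH1i hptw1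
      have hB2 : (∫ θ in π..(2*π), 1 / Aab s₂ θ^q) ≤
          ∫ θ in π..(2*π), (2*π)^q * ((1-s₂)+(2*π-θ))^(-q) :=
        intervalIntegral.integral_mono_on (by linarith) hGi2 hH2i hptw2
      have hcomp : (∫ θ in π..(2*π), (2*π)^q * ((1-s₂)+(2*π-θ))^(-q)) =
          ∫ θ in (0:ℝ)..π, (2*π)^q * ((1-s₂)+θ)^(-q) := by
        rw [intervalIntegral.integral_comp_sub_left
          (fun x => (2*π)^q * ((1-s₂)+x)^(-q)) (2*π)]
        rw [show 2*π - 2*π = (0:ℝ) by ring, show 2*π - π = π by ring]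
      have hval : (∫ θ in (0:ℝ)..π, (2*π)^q * ((1-s₂)+θ)^(-q)) ≤
          (2*π)^q * ((1-s₂)^(-q+1)/(q-1)) := by
        rw [intervalIntegral.integral_const_mul]
        exact mul_le_mul_of_nonneg_left (key_int q (1-s₂) hq hd₂) h2πq.le
      have hGtot : (∫ θ in (0:ℝ)..(2*π), 1 / Aab s₂ θ^q) ≤
          2 * ((2*π)^q * ((1-s₂)^(-q+1)/(q-1))) := by
        rw [hsplit]
        have := add_le_add hB1 hB2
        rw [hcomp] at this
        linarith [hval]
      refine hstepA.trans ?_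
      refine (mul_le_mul_of_nonneg_left hGtot (by positivity)).trans ?_
      have hrwe : (1-s₂)^(-q+1) = ((1-s₂)^(q-1))⁻¹ := by
        rw [show (-q+1) = -(q-1) by ring, Real.rpow_neg hd₂.le]
      rw [hrwe]
      have heq : (1/(1-s₁)^p) * (2 * ((2*π)^q * (((1-s₂)^(q-1))⁻¹/(q-1)))) =
          (2*(2*π)^q/(q-1)) * (1/((1-s₁)^p * (1-s₂)^(q-1))) := by
        field_simp
        repeat exact Or.inl trivial
      rw [heq]
      apply mul_le_mul_of_nonneg_right ?_ (by positivity)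
      linarith [hC2]
end

section
/- Let 0 ≤ s₁ ≤ s₂ < 1 and p > 0. Then ∫_0^{2π} dθ / (|1 − s₁e^{iθ}|^p · |1 − s₂e^{iθ}|) ≍ (1/(1−s₁)^p) · (log((1−s₁)/(1−s₂)) + 1), where the comparison constants depend only on p. -/
open Real Complex MeasureTheory intervalIntegral

lemma absSq (s θ : ℝ) :
    (‖1 - s*Complex.exp (θ*Complex.I)‖)^2 = 1 - 2*s*Real.cos θ + s^2 := by
  rw [Complex.sq_norm, Complex.normSq_apply]
  simp
  nlinarith [Real.sin_sq_add_cos_sq θ]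

noncomputable def mm (θ : ℝ) : ℝ := ‖1 - Complex.exp (θ*Complex.I)‖

lemma mm_nonneg (θ : ℝ) : 0 ≤ mm θ := norm_nonneg _

lemma mm_sq (θ : ℝ) : (mm θ)^2 = 2 - 2*Real.cos θ := by
  have := absSq 1 θ
  simp only [Complex.ofReal_one, one_mul] at this
  rw [mm, this]; ring

lemma mm_le_two (θ : ℝ) : mm θ ≤ 2 := by
  nlinarith [mm_sq θ, mm_nonneg θ, Real.neg_one_le_cos θ]

lemma abs_le_add (s θ : ℝ) (hs0 : 0 ≤ s) (hs1 : s ≤ 1) :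
    ‖1 - s*Complex.exp (θ*Complex.I)‖ ≤ (1 - s) + mm θ := by
  have h1 := absSq s θ
  have h2 := mm_sq θ
  have h3 := mm_nonneg θ
  have h4 := norm_nonneg (1 - s*Complex.exp (θ*Complex.I))
  nlinarith [sq_nonneg (‖1 - s*Complex.exp (θ*Complex.I)‖ - ((1-s) + mm θ))]

lemma add_le_five_abs (s θ : ℝ) (hs0 : 0 ≤ s) (hs1 : s ≤ 1) :
    (1 - s) + mm θ ≤ 5 * ‖1 - s*Complex.exp (θ*Complex.I)‖ := by
  set X := ‖1 - s*Complex.exp (θ*Complex.I)‖ with hX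
  have h1 := absSq s θ
  have h2 := mm_sq θ
  have h3 := mm_nonneg θ
  have h4 : 0 ≤ X := norm_nonneg _
  have h5 := mm_le_two θ
  have hX2 : X^2 = (1-s)^2 + s * (mm θ)^2 := by linear_combination h1 - s * h2
  have key : ((1-s) + mm θ)^2 ≤ (5 * X)^2 := by
    rcases le_total s (1/2) with h | h
    · nlinarith [sq_nonneg (mm θ), sq_nonneg (1-s), mul_nonneg hs0 (sq_nonneg (mm θ))]
    · nlinarith [sq_nonneg (1 - s - mm θ), sq_nonneg (mm θ), mul_nonneg hs0 (sq_nonneg (mm θ))]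
  calc (1-s) + mm θ = Real.sqrt (((1-s) + mm θ)^2) := (Real.sqrt_sq (by linarith)).symm
    _ ≤ Real.sqrt ((5*X)^2) := Real.sqrt_le_sqrt key
    _ = 5 * X := Real.sqrt_sq (by linarith)

lemma mm_le_theta {θ : ℝ} (h0 : 0 ≤ θ) : mm θ ≤ θ := by
  have h2 := mm_sq θ
  have h3 := mm_nonneg θ
  have := Real.one_sub_sq_div_two_le_cos (x := θ)
  nlinarith

lemma theta_le_two_mm {θ : ℝ} (h0 : 0 ≤ θ) (h1 : θ ≤ π) : θ ≤ 2 * mm θ := by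
  have h2 := mm_sq θ
  have h3 := mm_nonneg θ
  have hcos : Real.cos θ ≤ 1 - 2/π^2 * θ^2 :=
    Real.cos_le_one_sub_mul_cos_sq (by rwa [_root_.abs_of_nonneg h0])
  have hπ : (0:ℝ) < π := Real.pi_pos
  have hπ2 : π^2 ≤ 16 := by nlinarith [Real.pi_le_four]
  have hinv : (1:ℝ)/8 ≤ 2/π^2 := by
    rw [div_le_div_iff₀ (by norm_num) (by positivity)]; nlinarith
  have hq := mul_le_mul_of_nonneg_right hinv (sq_nonneg θ)
  have hkey : (θ/2)^2 ≤ (mm θ)^2 := by rw [h2]; nlinarith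
  nlinarith [hkey]

lemma abs_symm (s θ : ℝ) :
    ‖1 - s*Complex.exp ((2*π - θ : ℝ)*Complex.I)‖
      = ‖1 - s*Complex.exp (θ*Complex.I)‖ := by
  have h1 := absSq s θ
  have h2 := absSq s (2*π - θ)
  have h3 := norm_nonneg (1 - s*Complex.exp (θ*Complex.I))
  have h4 := norm_nonneg (1 - s*Complex.exp ((2*π-θ : ℝ)*Complex.I))
  have hc : Real.cos (2*π - θ) = Real.cos θ := by
    rw [Real.cos_sub]; simp
  rw [← Real.sqrt_sq h4, ← Real.sqrt_sq h3, h1, h2, hc]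

lemma g_contOn (p a₁ a₂ : ℝ) (h2 : 0 < a₂) (h21 : a₂ ≤ a₁) :
    ContinuousOn (fun θ : ℝ => ((a₁+θ)^p * (a₂+θ))⁻¹) (Set.Ici 0) := by
  apply ContinuousOn.inv₀
  · exact ((continuousOn_const.add continuousOn_id).rpow_const
      (fun x hx => Or.inl (by
        have hx' : (0:ℝ) ≤ x := hx
        have ha₁ : 0 < a₁ := lt_of_lt_of_le h2 h21
        exact (show (0:ℝ) < a₁ + x by linarith).ne'))).mul
      (continuousOn_const.add continuousOn_id)
  · intro x hx
    have hx' : (0:ℝ) ≤ x := hx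
    have h1 : (0:ℝ) < a₁ + x := by linarith
    have h2' : (0:ℝ) < a₂ + x := by linarith
    positivity

lemma g_intble (p a₁ a₂ : ℝ) (h2 : 0 < a₂) (h21 : a₂ ≤ a₁) (c d : ℝ) (hc : 0 ≤ c) (hd : 0 ≤ d) :
    IntervalIntegrable (fun θ : ℝ => ((a₁+θ)^p * (a₂+θ))⁻¹) volume c d := by
  apply ((g_contOn p a₁ a₂ h2 h21).mono ?_).intervalIntegrable
  intro x hx
  rcases Set.mem_uIcc.mp hx with ⟨h,_⟩|⟨h,_⟩ <;> exact le_trans (by assumption) h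

lemma inv_shift_intble (a c d : ℝ) (ha : 0 < a) (hc : 0 ≤ c) (hd : 0 ≤ d) :
    IntervalIntegrable (fun θ : ℝ => (a+θ)⁻¹) volume c d := by
  apply ContinuousOn.intervalIntegrable
  apply ContinuousOn.inv₀ (continuousOn_const.add continuousOn_id)
  intro x hx
  have : 0 ≤ x := by
    rcases Set.mem_uIcc.mp hx with ⟨h,_⟩|⟨h,_⟩ <;> exact le_trans (by assumption) h
  exact (show (0:ℝ) < a + x by linarith).ne'

lemma int_inv_shift (a b : ℝ) (ha : 0 < a) (hb : 0 ≤ b) :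
    ∫ θ in (0:ℝ)..b, (a+θ)⁻¹ = Real.log ((a+b)/a) := by
  have := intervalIntegral.integral_comp_add_left (a := (0:ℝ)) (b := b) (fun x : ℝ => x⁻¹) a
  rw [this, add_zero, integral_inv]
  · rw [Set.uIcc_of_le (by linarith)]
    intro h
    exact absurd (Set.mem_Icc.mp h).1 (by linarith)

lemma int_rpow_piece (p a : ℝ) (hp : 0 < p) (ha : 0 < a) (hab : a ≤ π) :
    ∫ θ in a..π, θ^(-(p+1)) = (a^(-p) - π^(-p))/p := by
  rw [integral_rpow (Or.inr ⟨by intro h; nlinarith, by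
      rw [Set.uIcc_of_le hab]; intro h; exact absurd (Set.mem_Icc.mp h).1 (by linarith)⟩)]
  have h1 : -(p+1)+1 = -p := by ring
  rw [h1, div_neg, ← neg_div, neg_sub]

lemma rpow_intble (r a b : ℝ) (ha : 0 < a) (hb : 0 < b) :
    IntervalIntegrable (fun θ : ℝ => θ^r) volume a b := by
  apply ContinuousOn.intervalIntegrable
  intro x hx
  have hx0 : 0 < x := by
    rcases Set.mem_uIcc.mp hx with ⟨h,_⟩|⟨h,_⟩ <;> linarith
  exact (Real.continuousAt_rpow_const x r (Or.inl hx0.ne')).continuousWithinAt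

lemma log_ratio_low (a₁ a₂ : ℝ) (h2 : 0 < a₂) (h21 : a₂ ≤ a₁) :
    Real.log 2 / 2 * (Real.log (a₁/a₂) + 1) ≤ Real.log ((a₂+a₁)/a₂) := by
  have hx0 : 0 ≤ Real.log (a₁/a₂) := Real.log_nonneg ((one_le_div h2).mpr h21)
  have hL1 : Real.log (a₁/a₂) ≤ Real.log ((a₂+a₁)/a₂) :=
    Real.log_le_log (div_pos (by linarith) h2) (by apply div_le_div_of_nonneg_right <;> linarith)
  have hL2 : Real.log 2 ≤ Real.log ((a₂+a₁)/a₂) :=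
    Real.log_le_log (by norm_num) (by rw [le_div_iff₀ h2]; linarith)
  have hlog2 : Real.log 2 ≤ 1 := by linarith [Real.log_two_lt_d9]
  nlinarith [mul_nonneg (sub_nonneg.mpr hlog2) hx0]

lemma J_low (p a₁ a₂ : ℝ) (hp : 0 < p) (h2 : 0 < a₂) (h21 : a₂ ≤ a₁) (h1 : a₁ ≤ 1) :
    (2:ℝ)^(-p) * (Real.log 2 / 2) * ((a₁^p)⁻¹ * (Real.log (a₁/a₂) + 1)) ≤
      ∫ θ in (0:ℝ)..π, ((a₁+θ)^p * (a₂+θ))⁻¹ := by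
  have h0a : 0 < a₁ := lt_of_lt_of_le h2 h21
  have hπ : a₁ ≤ π := le_trans h1 (by linarith [Real.pi_gt_three])
  have hsplit : (∫ θ in (0:ℝ)..a₁, ((a₁+θ)^p * (a₂+θ))⁻¹) + (∫ θ in a₁..π, ((a₁+θ)^p * (a₂+θ))⁻¹)
      = ∫ θ in (0:ℝ)..π, ((a₁+θ)^p * (a₂+θ))⁻¹ :=
    integral_add_adjacent_intervals (g_intble p a₁ a₂ h2 h21 0 a₁ le_rfl h0a.le)
      (g_intble p a₁ a₂ h2 h21 a₁ π h0a.le Real.pi_pos.le)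
  have hsecond : 0 ≤ ∫ θ in a₁..π, ((a₁+θ)^p * (a₂+θ))⁻¹ := by
    apply intervalIntegral.integral_nonneg hπ
    intro x hx
    have hx0 : 0 ≤ x := le_trans h0a.le hx.1
    positivity
  have hmono : (∫ θ in (0:ℝ)..a₁, ((2*a₁)^p)⁻¹ * (a₂+θ)⁻¹) ≤
      ∫ θ in (0:ℝ)..a₁, ((a₁+θ)^p * (a₂+θ))⁻¹ := by
    apply intervalIntegral.integral_mono_on h0a.le
      ((inv_shift_intble a₂ 0 a₁ h2 le_rfl h0a.le).const_mul _)
      (g_intble p a₁ a₂ h2 h21 0 a₁ le_rfl h0a.le)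
    intro x hx
    have hx0 : 0 ≤ x := hx.1
    have hx1 : x ≤ a₁ := hx.2
    rw [mul_inv]
    apply mul_le_mul_of_nonneg_right _ (by positivity)
    apply inv_anti₀ (by positivity)
    exact Real.rpow_le_rpow (by positivity) (by linarith) hp.le
  have hval : (∫ θ in (0:ℝ)..a₁, ((2*a₁)^p)⁻¹ * (a₂+θ)⁻¹)
      = ((2*a₁)^p)⁻¹ * Real.log ((a₂+a₁)/a₂) := by
    rw [intervalIntegral.integral_const_mul, int_inv_shift a₂ a₁ h2 h0a.le]
  have hconst : ((2*a₁)^p)⁻¹ = (2:ℝ)^(-p) * (a₁^p)⁻¹ := by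
    rw [Real.mul_rpow (by norm_num) h0a.le, mul_inv, Real.rpow_neg (by norm_num)]
  have hlog := log_ratio_low a₁ a₂ h2 h21
  calc (2:ℝ)^(-p) * (Real.log 2 / 2) * ((a₁^p)⁻¹ * (Real.log (a₁/a₂) + 1))
      = ((2*a₁)^p)⁻¹ * (Real.log 2 / 2 * (Real.log (a₁/a₂) + 1)) := by rw [hconst]; ring
    _ ≤ ((2*a₁)^p)⁻¹ * Real.log ((a₂+a₁)/a₂) := by
        apply mul_le_mul_of_nonneg_left hlog (by positivity)
    _ = ∫ θ in (0:ℝ)..a₁, ((2*a₁)^p)⁻¹ * (a₂+θ)⁻¹ := hval.symm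
    _ ≤ ∫ θ in (0:ℝ)..a₁, ((a₁+θ)^p * (a₂+θ))⁻¹ := hmono
    _ ≤ ∫ θ in (0:ℝ)..π, ((a₁+θ)^p * (a₂+θ))⁻¹ := by rw [← hsplit]; linarith

lemma J_up (p a₁ a₂ : ℝ) (hp : 0 < p) (h2 : 0 < a₂) (h21 : a₂ ≤ a₁) (h1 : a₁ ≤ 1) :
    (∫ θ in (0:ℝ)..π, ((a₁+θ)^p * (a₂+θ))⁻¹) ≤
      (1 + 1/p) * ((a₁^p)⁻¹ * (Real.log (a₁/a₂) + 1)) := by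
  have h0a : 0 < a₁ := lt_of_lt_of_le h2 h21
  have hπ : a₁ ≤ π := le_trans h1 (by linarith [Real.pi_gt_three])
  have hsplit : (∫ θ in (0:ℝ)..a₁, ((a₁+θ)^p * (a₂+θ))⁻¹) + (∫ θ in a₁..π, ((a₁+θ)^p * (a₂+θ))⁻¹)
      = ∫ θ in (0:ℝ)..π, ((a₁+θ)^p * (a₂+θ))⁻¹ :=
    integral_add_adjacent_intervals (g_intble p a₁ a₂ h2 h21 0 a₁ le_rfl h0a.le)
      (g_intble p a₁ a₂ h2 h21 a₁ π h0a.le Real.pi_pos.le)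
  have hm1 : (∫ θ in (0:ℝ)..a₁, ((a₁+θ)^p * (a₂+θ))⁻¹) ≤
      ∫ θ in (0:ℝ)..a₁, (a₁^p)⁻¹ * (a₂+θ)⁻¹ := by
    apply intervalIntegral.integral_mono_on h0a.le
      (g_intble p a₁ a₂ h2 h21 0 a₁ le_rfl h0a.le)
      ((inv_shift_intble a₂ 0 a₁ h2 le_rfl h0a.le).const_mul _)
    intro x hx
    have hx0 : 0 ≤ x := hx.1
    rw [mul_inv]
    apply mul_le_mul_of_nonneg_right _ (by positivity)
    apply inv_anti₀ (by positivity)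
    exact Real.rpow_le_rpow h0a.le (by linarith) hp.le
  have hval1 : (∫ θ in (0:ℝ)..a₁, (a₁^p)⁻¹ * (a₂+θ)⁻¹)
      = (a₁^p)⁻¹ * Real.log ((a₂+a₁)/a₂) := by
    rw [intervalIntegral.integral_const_mul, int_inv_shift a₂ a₁ h2 h0a.le]
  have hm2 : (∫ θ in a₁..π, ((a₁+θ)^p * (a₂+θ))⁻¹) ≤ ∫ θ in a₁..π, θ^(-(p+1)) := by
    apply intervalIntegral.integral_mono_on hπ
      (g_intble p a₁ a₂ h2 h21 a₁ π h0a.le Real.pi_pos.le)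
      (rpow_intble _ _ _ h0a Real.pi_pos)
    intro x hx
    have hx0 : 0 < x := lt_of_lt_of_le h0a hx.1
    rw [Real.rpow_neg hx0.le, Real.rpow_add_one hx0.ne']
    apply inv_anti₀ (by positivity)
    have hb1 : x^p ≤ (a₁+x)^p := Real.rpow_le_rpow hx0.le (by linarith) hp.le
    have hb2 : x ≤ a₂+x := by linarith
    exact mul_le_mul hb1 hb2 hx0.le (by positivity)
  have hval2 := int_rpow_piece p a₁ hp h0a hπ
  have hlog : Real.log ((a₂+a₁)/a₂) ≤ Real.log (a₁/a₂) + Real.log 2 := by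
    have h' : Real.log ((a₂+a₁)/a₂) ≤ Real.log (2*(a₁/a₂)) :=
      Real.log_le_log (by positivity) (by rw [← mul_div_assoc]; gcongr <;> linarith)
    rw [Real.log_mul (by norm_num) (by positivity)] at h'
    linarith
  have hx0 : 0 ≤ Real.log (a₁/a₂) := Real.log_nonneg ((one_le_div h2).mpr h21)
  have hlog2 : Real.log 2 ≤ 1 := by linarith [Real.log_two_lt_d9]
  have hA : (0:ℝ) < (a₁^p)⁻¹ := by positivity
  have hneg : a₁^(-p) = (a₁^p)⁻¹ := Real.rpow_neg h0a.le p
  have hπp : (0:ℝ) ≤ π^(-p) := Real.rpow_nonneg Real.pi_pos.le _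
  rw [← hsplit]
  have e1 : (∫ θ in (0:ℝ)..a₁, ((a₁+θ)^p * (a₂+θ))⁻¹) ≤
      (a₁^p)⁻¹ * (Real.log (a₁/a₂) + Real.log 2) := by
    rw [hval1] at hm1
    exact le_trans hm1 (mul_le_mul_of_nonneg_left hlog hA.le)
  have e2 : (∫ θ in a₁..π, ((a₁+θ)^p * (a₂+θ))⁻¹) ≤ (a₁^p)⁻¹ / p := by
    rw [hval2, hneg] at hm2
    have : ((a₁^p)⁻¹ - π^(-p))/p ≤ (a₁^p)⁻¹/p := by
      gcongr
      linarith
    linarith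
  have hp' : 0 < 1/p := by positivity
  have h1' : (a₁^p)⁻¹ * Real.log 2 ≤ (a₁^p)⁻¹ * 1 := mul_le_mul_of_nonneg_left hlog2 hA.le
  have h2' : 0 ≤ 1/p*(a₁^p)⁻¹*(Real.log (a₁/a₂)) := mul_nonneg (mul_nonneg hp'.le hA.le) hx0
  have expand : (1+1/p)*((a₁^p)⁻¹*(Real.log (a₁/a₂)+1)) =
      (a₁^p)⁻¹*(Real.log (a₁/a₂)) + (a₁^p)⁻¹*1 + 1/p*(a₁^p)⁻¹*(Real.log (a₁/a₂)) + (a₁^p)⁻¹/p := by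
    field_simp; ring
  rw [expand]
  have e1' : (∫ θ in (0:ℝ)..a₁, ((a₁+θ)^p * (a₂+θ))⁻¹) ≤
      (a₁^p)⁻¹*(Real.log (a₁/a₂)) + (a₁^p)⁻¹ * Real.log 2 := by
    rw [mul_add] at e1; linarith
  linarith

theorem stmt13 (p : ℝ) (hp : 0 < p) :
    ∃ c C : ℝ, 0 < c ∧ 0 < C ∧ ∀ s₁ s₂ : ℝ, 0 ≤ s₁ → s₁ ≤ s₂ → s₂ < 1 →
      c * ((1 / (1 - s₁) ^ p) * (Real.log ((1 - s₁) / (1 - s₂)) + 1)) ≤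
        (∫ θ in (0:ℝ)..(2 * π),
          1 / (‖1 - s₁ * Complex.exp (θ * Complex.I)‖ ^ p *
               ‖1 - s₂ * Complex.exp (θ * Complex.I)‖)) ∧
      (∫ θ in (0:ℝ)..(2 * π),
          1 / (‖1 - s₁ * Complex.exp (θ * Complex.I)‖ ^ p *
               ‖1 - s₂ * Complex.exp (θ * Complex.I)‖)) ≤
        C * ((1 / (1 - s₁) ^ p) * (Real.log ((1 - s₁) / (1 - s₂)) + 1)) := by
  refine ⟨2 * ((2:ℝ)^(-p) * (Real.log 2 / 2)), 2 * ((10:ℝ)^p * 10) * (1 + 1/p), ?_, ?_, ?_⟩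
  · have : (0:ℝ) < Real.log 2 := Real.log_pos (by norm_num)
    positivity
  · positivity
  intro s₁ s₂ hs₁0 hs₁₂ hs₂1
  set a₁ := 1 - s₁ with ha₁
  set a₂ := 1 - s₂ with ha₂
  have h2 : 0 < a₂ := by simp [ha₂]; linarith
  have h21 : a₂ ≤ a₁ := by simp [ha₁, ha₂]; linarith
  have h1 : a₁ ≤ 1 := by simp [ha₁]; linarith
  have h0a : 0 < a₁ := lt_of_lt_of_le h2 h21
  have hs₂0 : 0 ≤ s₂ := le_trans hs₁0 hs₁₂
  have hs₁1 : s₁ ≤ 1 := by linarith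
  have hs₂1' : s₂ ≤ 1 := hs₂1.le
  set f : ℝ → ℝ := fun θ =>
    1 / (‖1 - s₁ * Complex.exp (θ * Complex.I)‖ ^ p *
         ‖1 - s₂ * Complex.exp (θ * Complex.I)‖) with hf
  -- positivity of the abs terms
  have habs_pos : ∀ s θ : ℝ, 0 ≤ s → s ≤ 1 → s < 1 →
      0 < ‖1 - s * Complex.exp (θ * Complex.I)‖ := by
    intro s θ h0 h1' hlt
    have := add_le_five_abs s θ h0 h1'
    have := mm_nonneg θ
    linarith
  have hA₁pos : ∀ θ : ℝ, 0 < ‖1 - s₁ * Complex.exp (θ * Complex.I)‖ :=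
    fun θ => habs_pos s₁ θ hs₁0 hs₁1 (by linarith)
  have hA₂pos : ∀ θ : ℝ, 0 < ‖1 - s₂ * Complex.exp (θ * Complex.I)‖ :=
    fun θ => habs_pos s₂ θ hs₂0 hs₂1' hs₂1
  -- continuity of f
  have habs_cont : ∀ s : ℝ, Continuous fun θ : ℝ =>
      ‖1 - s * Complex.exp (θ * Complex.I)‖ := by
    intro s
    apply continuous_norm.comp
    continuity
  have hf_cont : Continuous f := by
    rw [hf]
    simp only [one_div]
    apply Continuous.inv₀
    · exact ((habs_cont s₁).rpow_const (fun x => Or.inr hp.le)).mul (habs_cont s₂)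
    · intro x
      have := hA₁pos x; have := hA₂pos x
      positivity
  have hf_int : ∀ c d : ℝ, IntervalIntegrable f volume c d :=
    fun c d => hf_cont.intervalIntegrable c d
  -- symmetry: integral over [π, 2π] equals integral over [0, π]
  have hsym : (∫ θ in π..(2*π), f θ) = ∫ θ in (0:ℝ)..π, f θ := by
    have hc := intervalIntegral.integral_comp_sub_left (a := (0:ℝ)) (b := π) f (2*π)
    have h2π : 2*π - π = π := by ring
    have h2π0 : 2*π - 0 = 2*π := by ring
    rw [h2π, h2π0] at hc
    rw [← hc]
    apply intervalIntegral.integral_congr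
    intro x hx
    simp only [hf]
    rw [abs_symm s₁ x, abs_symm s₂ x]
  have hItot : (∫ θ in (0:ℝ)..(2*π), f θ) = 2 * ∫ θ in (0:ℝ)..π, f θ := by
    rw [← integral_add_adjacent_intervals (hf_int 0 π) (hf_int π (2*π)), hsym]
    ring
  -- pointwise comparison on [0, π]
  have hπpos := Real.pi_pos
  have hlow : (∫ θ in (0:ℝ)..π, ((a₁+θ)^p * (a₂+θ))⁻¹) ≤ ∫ θ in (0:ℝ)..π, f θ := by
    apply intervalIntegral.integral_mono_on hπpos.le
      (g_intble p a₁ a₂ h2 h21 0 π le_rfl hπpos.le) (hf_int 0 π)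
    intro x hx
    have hx0 : 0 ≤ x := hx.1
    have hA₁ : ‖1 - s₁ * Complex.exp (x * Complex.I)‖ ≤ a₁ + x := by
      have := abs_le_add s₁ x hs₁0 hs₁1
      have := mm_le_theta hx0
      simp only [ha₁]; push_cast; linarith
    have hA₂ : ‖1 - s₂ * Complex.exp (x * Complex.I)‖ ≤ a₂ + x := by
      have := abs_le_add s₂ x hs₂0 hs₂1'
      have := mm_le_theta hx0
      simp only [ha₂]; push_cast; linarith
    simp only [hf, one_div]
    apply inv_anti₀
    · have := hA₁pos x; have := hA₂pos x; positivity
    · exact mul_le_mul (Real.rpow_le_rpow (hA₁pos x).le hA₁ hp.le) hA₂ (hA₂pos x).le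
        (Real.rpow_nonneg (by linarith) p)
  have hup : (∫ θ in (0:ℝ)..π, f θ) ≤
      ∫ θ in (0:ℝ)..π, ((10:ℝ)^p * 10) * ((a₁+θ)^p * (a₂+θ))⁻¹ := by
    apply intervalIntegral.integral_mono_on hπpos.le (hf_int 0 π)
      ((g_intble p a₁ a₂ h2 h21 0 π le_rfl hπpos.le).const_mul _)
    intro x hx
    have hx0 : 0 ≤ x := hx.1
    have hx1 : x ≤ π := hx.2
    have hmm := theta_le_two_mm hx0 hx1
    have hmm0 := mm_nonneg x
    have hA₁ : (a₁ + x)/10 ≤ ‖1 - s₁ * Complex.exp (x * Complex.I)‖ := by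
      have := add_le_five_abs s₁ x hs₁0 hs₁1
      simp only [ha₁]; push_cast; linarith
    have hA₂ : (a₂ + x)/10 ≤ ‖1 - s₂ * Complex.exp (x * Complex.I)‖ := by
      have := add_le_five_abs s₂ x hs₂0 hs₂1'
      simp only [ha₂]; push_cast; linarith
    have hden : ((a₁+x)/10)^p * ((a₂+x)/10) ≤
        ‖1 - s₁ * Complex.exp (x * Complex.I)‖ ^ p *
        ‖1 - s₂ * Complex.exp (x * Complex.I)‖ := by
      apply mul_le_mul (Real.rpow_le_rpow (by positivity) hA₁ hp.le) hA₂ (by positivity)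
        (Real.rpow_nonneg (hA₁pos x).le p)
    have hpos : (0:ℝ) < ((a₁+x)/10)^p * ((a₂+x)/10) := by
      have : (0:ℝ) < a₁ + x := by linarith
      have : (0:ℝ) < a₂ + x := by linarith
      positivity
    have hinv : f x ≤ (((a₁+x)/10)^p * ((a₂+x)/10))⁻¹ := by
      simp only [hf, one_div]
      exact inv_anti₀ hpos hden
    have heq : (((a₁+x)/10)^p * ((a₂+x)/10))⁻¹ = ((10:ℝ)^p * 10) * ((a₁+x)^p * (a₂+x))⁻¹ := by
      rw [Real.div_rpow (by linarith) (by norm_num)]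
      have h10 : ((10:ℝ)^p) ≠ 0 := by positivity
      have ha₁x : ((a₁+x)^p) ≠ 0 := by
        have : (0:ℝ) < a₁ + x := by linarith
        positivity
      have ha₂x : (a₂+x) ≠ 0 := by intro h; linarith [h2, hx0]
      field_simp
    rw [heq] at hinv
    exact hinv
  rw [intervalIntegral.integral_const_mul] at hup
  -- conclude
  have hJlow := J_low p a₁ a₂ hp h2 h21 h1
  have hJup := J_up p a₁ a₂ hp h2 h21 h1
  have hone : (1:ℝ) / a₁ ^ p = (a₁^p)⁻¹ := one_div _
  constructor
  · rw [hItot]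
    calc 2 * ((2:ℝ)^(-p) * (Real.log 2 / 2)) * (1 / a₁ ^ p * (Real.log (a₁/a₂) + 1))
        = 2 * ((2:ℝ)^(-p) * (Real.log 2 / 2) * ((a₁^p)⁻¹ * (Real.log (a₁/a₂) + 1))) := by
          rw [hone]; ring
      _ ≤ 2 * ∫ θ in (0:ℝ)..π, ((a₁+θ)^p * (a₂+θ))⁻¹ := by linarith
      _ ≤ 2 * ∫ θ in (0:ℝ)..π, f θ := by linarith
  · rw [hItot]
    calc 2 * (∫ θ in (0:ℝ)..π, f θ)
        ≤ 2 * (((10:ℝ)^p * 10) * ∫ θ in (0:ℝ)..π, ((a₁+θ)^p * (a₂+θ))⁻¹) := by linarith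
      _ ≤ 2 * (((10:ℝ)^p * 10) * ((1 + 1/p) * ((a₁^p)⁻¹ * (Real.log (a₁/a₂) + 1)))) := by
          have hc10 : (0:ℝ) < (10:ℝ)^p * 10 := by positivity
          have := mul_le_mul_of_nonneg_left hJup hc10.le
          linarith
      _ = 2 * ((10:ℝ)^p * 10) * (1 + 1/p) * (1 / a₁ ^ p * (Real.log (a₁/a₂) + 1)) := by
          rw [hone]; ring
end

section
/- Let 0 ≤ s₁ ≤ s₂ < 1 and p > 0, 0 < q < 1 with p + q > 1. Then ∫_0^{2π} dθ / (|1 − s₁e^{iθ}|^p · |1 − s₂e^{iθ}|^q) ≍ 1/(1−s₁)^{p+q−1}, with comparison constants depending only on p and q. -/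
open Real Complex

noncomputable def Aa (s θ : ℝ) : ℝ := ‖1 - s * Complex.exp (θ * Complex.I)‖

lemma abs_s_exp (s θ : ℝ) (hs0 : 0 ≤ s) :
    ‖(s:ℂ) * Complex.exp (θ * Complex.I)‖ = s := by
  rw [norm_mul, Complex.norm_exp_ofReal_mul_I, Complex.norm_real, Real.norm_eq_abs, mul_one, _root_.abs_of_nonneg hs0]

lemma Aa_ge_one_sub (s θ : ℝ) (hs0 : 0 ≤ s) : 1 - s ≤ Aa s θ := by
  have := norm_sub_norm_le (1 : ℂ) ((s:ℂ) * Complex.exp (θ * Complex.I))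
  simpa [Aa, abs_s_exp s θ hs0, _root_.abs_of_nonneg hs0] using this

lemma Aa_pos (s θ : ℝ) (hs0 : 0 ≤ s) (hs1 : s < 1) : 0 < Aa s θ :=
  lt_of_lt_of_le (by linarith) (Aa_ge_one_sub s θ hs0)

lemma abs_one_sub_exp (θ : ℝ) (h0 : 0 ≤ θ) (h2 : θ ≤ 2 * π) :
    ‖1 - Complex.exp (θ * Complex.I)‖ = 2 * Real.sin (θ / 2) := by
  have hsin : 0 ≤ Real.sin (θ / 2) := by
    apply Real.sin_nonneg_of_nonneg_of_le_pi <;> [linarith; linarith]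
  rw [Complex.exp_mul_I]
  have : (1 : ℂ) - (Complex.cos θ + Complex.sin θ * Complex.I)
      = Complex.ofReal (1 - Real.cos θ) + Complex.ofReal (- Real.sin θ) * Complex.I := by
    push_cast [Complex.ofReal_cos, Complex.ofReal_sin]; ring
  rw [this]
  rw [Complex.norm_def, Complex.normSq_add_mul_I]
  have hval : (1 - Real.cos θ) ^ 2 + (-Real.sin θ) ^ 2 = (2 * Real.sin (θ / 2)) ^ 2 := by
    have h1 : Real.sin (θ/2) ^ 2 = (1 - Real.cos θ)/2 := by
      have := Real.sin_sq_eq_half_sub (θ/2)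
      rw [this]
      rw [show 2 * (θ/2) = θ by ring]
      ring
    have h2 := Real.sin_sq_add_cos_sq θ
    nlinarith
  rw [hval, Real.sqrt_sq (by linarith)]

lemma sin_half_ge (θ : ℝ) (h0 : 0 ≤ θ) (h2 : θ ≤ 2 * π) :
    min θ (2 * π - θ) / π ≤ Real.sin (θ / 2) := by
  have hπ := Real.pi_pos
  rcases le_total θ π with h | h
  · have := Real.mul_le_sin (x := θ/2) (by linarith) (by linarith)
    calc min θ (2*π - θ) / π ≤ θ / π := by
          gcongr; exact min_le_left _ _
      _ ≤ Real.sin (θ/2) := by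
          have h3 : 2 / π * (θ/2) = θ / π := by field_simp
          linarith [h3 ▸ this]
  · have := Real.mul_le_sin (x := π - θ/2) (by linarith) (by linarith)
    have heq : Real.sin (π - θ/2) = Real.sin (θ/2) := Real.sin_pi_sub (θ/2)
    calc min θ (2*π - θ) / π ≤ (2*π - θ) / π := by
          gcongr; exact min_le_right _ _
      _ ≤ Real.sin (θ/2) := by
          have h3 : 2 / π * (π - θ/2) = (2*π - θ) / π := by field_simp
          rw [heq] at this; linarith [h3 ▸ this]

lemma Aa_ge_min (s θ : ℝ) (hs0 : 0 ≤ s) (hs1 : s ≤ 1) (h0 : 0 ≤ θ) (h2 : θ ≤ 2 * π) :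
    min θ (2 * π - θ) / π ≤ Aa s θ := by
  have hπ := Real.pi_pos
  set e := Complex.exp (θ * Complex.I) with he
  have h1 : ‖1 - e‖ ≤ Aa s θ + (1 - s) := by
    have htri : ‖1 - e‖ ≤ ‖1 - (s:ℂ) * e‖ + ‖(s:ℂ) * e - e‖ := by
      simpa using norm_sub_le_norm_sub_add_norm_sub (1:ℂ) ((s:ℂ)*e) e
    have h2' : ‖(s:ℂ) * e - e‖ = 1 - s := by
      have : (s:ℂ) * e - e = ((s - 1 : ℝ):ℂ) * e := by push_cast; ring
      rw [this, norm_mul, Complex.norm_real, Real.norm_eq_abs, Complex.norm_exp_ofReal_mul_I, mul_one,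
        abs_of_nonpos (by linarith), neg_sub]
    rw [h2'] at htri
    simpa [Aa] using htri
  have h3 : 1 - s ≤ Aa s θ := Aa_ge_one_sub s θ hs0
  have h4 : 2 * (min θ (2 * π - θ) / π) ≤ ‖1 - e‖ := by
    rw [abs_one_sub_exp θ h0 h2]
    have := sin_half_ge θ h0 h2
    linarith
  linarith

lemma Aa_le (s θ : ℝ) (hs0 : 0 ≤ s) (hs1 : s ≤ 1) (h0 : 0 ≤ θ) (h1 : θ ≤ 1) :
    Aa s θ ≤ (1 - s) + 2 * θ := by
  set e := Complex.exp (θ * Complex.I) with he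
  have key : (1 : ℂ) - (s:ℂ) * e = ((1 - s : ℝ):ℂ) + (s:ℂ) * (1 - e) := by push_cast; ring
  have habs : ‖1 - e‖ ≤ 2 * θ := by
    have hx : ‖(θ:ℂ) * Complex.I‖ ≤ 1 := by
      simpa [_root_.abs_of_nonneg h0] using h1
    have := Complex.norm_exp_sub_one_le (x := (θ:ℂ) * Complex.I) hx
    have heq : ‖1 - e‖ = ‖e - 1‖ := by
      rw [show (1:ℂ) - e = -(e - 1) by ring, norm_neg]
    rw [heq]
    simpa [_root_.abs_of_nonneg h0] using this
  calc Aa s θ = ‖((1 - s : ℝ):ℂ) + (s:ℂ) * (1 - e)‖ := by rw [Aa, key]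
    _ ≤ ‖((1 - s : ℝ):ℂ)‖ + ‖(s:ℂ) * (1 - e)‖ := norm_add_le _ _
    _ ≤ (1 - s) + 2 * θ := by
        rw [norm_mul, Complex.norm_real, Complex.norm_real, Real.norm_eq_abs, Real.norm_eq_abs,
          _root_.abs_of_nonneg (by linarith : (0:ℝ) ≤ 1 - s), _root_.abs_of_nonneg hs0]
        nlinarith [norm_nonneg (1 - e)]

lemma Aa_symm (s θ : ℝ) : Aa s (2 * π - θ) = Aa s θ := by
  unfold Aa
  have h1 : Complex.exp (((2 * π - θ : ℝ):ℂ) * Complex.I) = Complex.exp (-(θ * Complex.I)) := by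
    rw [show (((2 * π - θ : ℝ):ℂ) * Complex.I) = 2 * π * Complex.I + (-(θ * Complex.I)) by
      push_cast; ring, Complex.exp_add, Complex.exp_two_pi_mul_I, one_mul]
  rw [h1]
  have h2 : (1 : ℂ) - s * Complex.exp (-(θ * Complex.I))
      = (starRingEnd ℂ) (1 - s * Complex.exp (θ * Complex.I)) := by
    rw [map_sub, map_mul, map_one, ← Complex.exp_conj]
    congr 2
    · simp
    · simp [map_mul, Complex.conj_ofReal, Complex.conj_I]
  rw [h2, Complex.norm_conj]

lemma Aa_cont (s : ℝ) : Continuous (fun θ : ℝ => Aa s θ) := by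
  unfold Aa
  apply continuous_norm.comp
  fun_prop

lemma g_cont (p q s₁ s₂ : ℝ) (hp : 0 < p) (hq : 0 < q) (h10 : 0 ≤ s₁) (h12 : s₁ ≤ s₂) (h21 : s₂ < 1) :
    Continuous (fun θ : ℝ => 1 / (Aa s₁ θ ^ p * Aa s₂ θ ^ q)) := by
  apply Continuous.div continuous_const
  · exact ((Aa_cont s₁).rpow_const (fun x => Or.inr hp.le)).mul
      ((Aa_cont s₂).rpow_const (fun x => Or.inr hq.le))
  · intro θ
    have h1 := Aa_pos s₁ θ h10 (lt_of_le_of_lt h12 h21)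
    have h2 := Aa_pos s₂ θ (le_trans h10 h12) h21
    positivity

theorem stmt14 (p q : ℝ) (hp : 0 < p) (hq0 : 0 < q) (hq1 : q < 1) (hpq : 1 < p + q) :
    ∃ c C : ℝ, 0 < c ∧ 0 < C ∧ ∀ s₁ s₂ : ℝ, 0 ≤ s₁ → s₁ ≤ s₂ → s₂ < 1 →
      c * (1 / (1 - s₁) ^ (p + q - 1)) ≤
        (∫ θ in (0:ℝ)..(2 * π),
          1 / (‖1 - s₁ * Complex.exp (θ * Complex.I)‖ ^ p *
               ‖1 - s₂ * Complex.exp (θ * Complex.I)‖ ^ q)) ∧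
      (∫ θ in (0:ℝ)..(2 * π),
          1 / (‖1 - s₁ * Complex.exp (θ * Complex.I)‖ ^ p *
               ‖1 - s₂ * Complex.exp (θ * Complex.I)‖ ^ q)) ≤
        C * (1 / (1 - s₁) ^ (p + q - 1)) := by
  have hπ := Real.pi_pos
  have hπ3 := Real.pi_gt_three
  refine ⟨(3:ℝ) ^ (-(p+q)), 2 * π * (1/(1-q) + 1/(p+q-1)), Real.rpow_pos_of_pos (by norm_num) _, by
    have h1 : 0 < 1/(1-q) := one_div_pos.mpr (by linarith)
    have h2 : 0 < 1/(p+q-1) := one_div_pos.mpr (by linarith)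
    have := Real.pi_pos
    nlinarith, ?_⟩
  intro s₁ s₂ h10 h12 h21
  have h11 : s₁ < 1 := lt_of_le_of_lt h12 h21
  have h20 : 0 ≤ s₂ := le_trans h10 h12
  set t : ℝ := 1 - s₁ with htdef
  have ht : 0 < t := by simp [htdef]; linarith
  have ht1 : t ≤ 1 := by simp [htdef]; linarith
  have ht2 : 1 - s₂ ≤ t := by simp [htdef]; linarith
  have hAa : ∀ s θ : ℝ, ‖1 - (s:ℂ) * Complex.exp ((θ:ℂ) * Complex.I)‖ = Aa s θ :=
    fun _ _ => rfl
  simp only [hAa]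
  set g : ℝ → ℝ := fun θ => 1 / (Aa s₁ θ ^ p * Aa s₂ θ ^ q) with hgdef
  have hgc : Continuous g := g_cont p q s₁ s₂ hp hq0 h10 h12 h21
  have hgi : ∀ a b : ℝ, IntervalIntegrable g MeasureTheory.volume a b :=
    fun a b => hgc.intervalIntegrable a b
  have hgnn : ∀ θ, 0 ≤ g θ := by
    intro θ
    have h1 := Aa_pos s₁ θ h10 h11
    have h2 := Aa_pos s₂ θ h20 h21
    positivity
  have hgpos : ∀ θ, 0 < g θ := by
    intro θ
    have h1 := Aa_pos s₁ θ h10 h11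
    have h2 := Aa_pos s₂ θ h20 h21
    positivity
  constructor
  · -- lower bound
    have hsplit : ∫ θ in (0:ℝ)..(2*π), g θ
        = (∫ θ in (0:ℝ)..t, g θ) + ∫ θ in t..(2*π), g θ :=
      (intervalIntegral.integral_add_adjacent_intervals (hgi 0 t) (hgi t (2*π))).symm
    have htail : 0 ≤ ∫ θ in t..(2*π), g θ :=
      intervalIntegral.integral_nonneg (by linarith) (fun u _ => hgnn u)
    set K : ℝ := ((3*t) ^ p * (3*t) ^ q)⁻¹ with hKdef
    have hKpos : 0 < K := by
      have h3t : 0 < 3*t := by linarith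
      positivity
    have hmono : ∀ θ ∈ Set.Icc (0:ℝ) t, K ≤ g θ := by
      intro θ hθ
      obtain ⟨hθ0, hθt⟩ := hθ
      have hb1 : Aa s₁ θ ≤ 3*t := by
        have := Aa_le s₁ θ h10 h11.le hθ0 (le_trans hθt ht1)
        simp only [htdef] at *
        linarith
      have hb2 : Aa s₂ θ ≤ 3*t := by
        have := Aa_le s₂ θ h20 h21.le hθ0 (le_trans hθt ht1)
        linarith
      have h1 := Aa_pos s₁ θ h10 h11
      have h2 := Aa_pos s₂ θ h20 h21
      have hr1 : Aa s₁ θ ^ p ≤ (3*t) ^ p := Real.rpow_le_rpow h1.le hb1 hp.le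
      have hr2 : Aa s₂ θ ^ q ≤ (3*t) ^ q := Real.rpow_le_rpow h2.le hb2 hq0.le
      have hd : 0 < Aa s₁ θ ^ p * Aa s₂ θ ^ q := by positivity
      rw [hgdef]
      simp only [one_div]
      apply inv_anti₀ hd
      have := Real.rpow_nonneg (x := Aa s₁ θ) (le_of_lt h1) p
      calc Aa s₁ θ ^ p * Aa s₂ θ ^ q ≤ (3*t) ^ p * (3*t) ^ q := by
            apply mul_le_mul hr1 hr2 (Real.rpow_nonneg h2.le q) (Real.rpow_nonneg (by linarith) p)
        _ = (3*t) ^ p * (3*t) ^ q := rfl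
    have hlow : K * t ≤ ∫ θ in (0:ℝ)..t, g θ := by
      have := intervalIntegral.integral_mono_on (μ := MeasureTheory.volume) ht.le
        (intervalIntegrable_const) (hgi 0 t) hmono
      simpa [mul_comm] using this
    have hKt : K * t = (3:ℝ) ^ (-(p+q)) * (1 / t ^ (p+q-1)) := by
      rw [hKdef, ← Real.rpow_add (by linarith : (0:ℝ) < 3*t),
        Real.mul_rpow (by norm_num : (0:ℝ) ≤ 3) ht.le,
        Real.rpow_neg (by norm_num : (0:ℝ) ≤ 3)]
      have htp : t ^ (p+q) = t ^ (p+q-1) * t := by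
        rw [← Real.rpow_add_one ht.ne' (p+q-1)]
        norm_num
      rw [htp]
      have h3 : ((3:ℝ) ^ (p+q)) ≠ 0 := by positivity
      have h4 : t ^ (p+q-1) ≠ 0 := by positivity
      field_simp
    calc (3:ℝ) ^ (-(p+q)) * (1 / t ^ (p+q-1)) = K * t := hKt.symm
      _ ≤ (∫ θ in (0:ℝ)..t, g θ) + ∫ θ in t..(2*π), g θ := by linarith
      _ = ∫ θ in (0:ℝ)..(2*π), g θ := hsplit.symm
  · -- upper bound
    have hq1' : (0:ℝ) < 1 - q := by linarith
    have hpq' : (0:ℝ) < p + q - 1 := by linarith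
    have hsym : ∫ θ in (0:ℝ)..(2*π), g θ = 2 * ∫ θ in (0:ℝ)..π, g θ := by
      have hsplit : ∫ θ in (0:ℝ)..(2*π), g θ
          = (∫ θ in (0:ℝ)..π, g θ) + ∫ θ in π..(2*π), g θ :=
        (intervalIntegral.integral_add_adjacent_intervals (hgi 0 π) (hgi π (2*π))).symm
      have h2 : ∫ θ in π..(2*π), g θ = ∫ θ in (0:ℝ)..π, g θ := by
        have hc := intervalIntegral.integral_comp_sub_left (a := (0:ℝ)) (b := π)
          (fun θ => g θ) (2*π)
        rw [show 2*π - π = π by ring, sub_zero] at hc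
        rw [← hc]
        apply intervalIntegral.integral_congr
        intro x _
        show g (2*π - x) = g x
        rw [hgdef]
        simp only [Aa_symm]
      rw [hsplit, h2]; ring
    set u : ℝ := π * t with hudef
    have hu0 : 0 < u := by positivity
    have huπ : u ≤ π := by nlinarith
    have hA1min : ∀ θ : ℝ, 0 ≤ θ → θ ≤ π → θ/π ≤ Aa s₁ θ := by
      intro θ hθ0 hθπ
      have := Aa_ge_min s₁ θ h10 h11.le hθ0 (by linarith)
      rwa [min_eq_left (by linarith : θ ≤ 2*π - θ)] at this
    have hA2min : ∀ θ : ℝ, 0 ≤ θ → θ ≤ π → θ/π ≤ Aa s₂ θ := by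
      intro θ hθ0 hθπ
      have := Aa_ge_min s₂ θ h20 h21.le hθ0 (by linarith)
      rwa [min_eq_left (by linarith : θ ≤ 2*π - θ)] at this
    -- piece 1 : (0, u]
    have hint1 : IntervalIntegrable (fun θ : ℝ => (t^(-p) * π^q) * θ^(-q))
        MeasureTheory.volume 0 u :=
      (intervalIntegral.intervalIntegrable_rpow' (by linarith : (-1:ℝ) < -q)).const_mul _
    have hP1 : ∫ θ in (0:ℝ)..u, g θ ≤ ∫ θ in (0:ℝ)..u, (t^(-p) * π^q) * θ^(-q) := by
      rw [intervalIntegral.integral_of_le hu0.le, intervalIntegral.integral_of_le hu0.le]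
      apply MeasureTheory.setIntegral_mono_on
        ((intervalIntegrable_iff_integrableOn_Ioc_of_le hu0.le).mp (hgi 0 u))
        ((intervalIntegrable_iff_integrableOn_Ioc_of_le hu0.le).mp hint1)
        measurableSet_Ioc
      rintro θ ⟨hθ0, hθu⟩
      have hθπ : θ ≤ π := le_trans hθu huπ
      have hA1 : t ≤ Aa s₁ θ := Aa_ge_one_sub s₁ θ h10
      have hA2 : θ/π ≤ Aa s₂ θ := hA2min θ hθ0.le hθπ
      have hθπ0 : 0 < θ/π := by positivity
      have hr1 : t^p ≤ Aa s₁ θ ^ p := Real.rpow_le_rpow ht.le hA1 hp.le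
      have hr2 : (θ/π)^q ≤ Aa s₂ θ ^ q := Real.rpow_le_rpow hθπ0.le hA2 hq0.le
      have hd : 0 < t^p * (θ/π)^q := by positivity
      have hmul : t^p * (θ/π)^q ≤ Aa s₁ θ ^ p * Aa s₂ θ ^ q :=
        mul_le_mul hr1 hr2 (Real.rpow_nonneg hθπ0.le q) (Real.rpow_nonneg (Aa_pos s₁ θ h10 h11).le p)
      calc g θ = (Aa s₁ θ ^ p * Aa s₂ θ ^ q)⁻¹ := one_div _
        _ ≤ (t^p * (θ/π)^q)⁻¹ := inv_anti₀ hd hmul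
        _ = (t^(-p) * π^q) * θ^(-q) := by
            rw [Real.div_rpow hθ0.le hπ.le, Real.rpow_neg ht.le, Real.rpow_neg hθ0.le]
            have h1 : t ^ p ≠ 0 := by positivity
            have h2 : θ ^ q ≠ 0 := ne_of_gt (Real.rpow_pos_of_pos hθ0 q)
            have h3 : π ^ q ≠ 0 := by positivity
            field_simp
    have hval1 : ∫ θ in (0:ℝ)..u, (t^(-p) * π^q) * θ^(-q)
        = (t^(-p) * π^q) * (u^(-q+1) / (-q+1)) := by
      rw [intervalIntegral.integral_const_mul]
      rw [integral_rpow (Or.inl (by linarith : (-1:ℝ) < -q))]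
      rw [Real.zero_rpow (by linarith : (-q+1:ℝ) ≠ 0)]
      ring
    -- piece 2 : [u, π]
    have hnot0 : (0:ℝ) ∉ Set.uIcc u π := Set.notMem_uIcc_of_lt hu0 hπ
    have hint2 : IntervalIntegrable (fun θ : ℝ => π^(p+q) * θ^(-(p+q)))
        MeasureTheory.volume u π :=
      (intervalIntegral.intervalIntegrable_rpow (Or.inr hnot0)).const_mul _
    have hP2 : ∫ θ in u..π, g θ ≤ ∫ θ in u..π, π^(p+q) * θ^(-(p+q)) := by
      apply intervalIntegral.integral_mono_on huπ (hgi u π) hint2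
      rintro θ ⟨hθu, hθπ⟩
      have hθ0 : 0 < θ := lt_of_lt_of_le hu0 hθu
      have hA1 : θ/π ≤ Aa s₁ θ := hA1min θ hθ0.le hθπ
      have hA2 : θ/π ≤ Aa s₂ θ := hA2min θ hθ0.le hθπ
      have hθπ0 : 0 < θ/π := by positivity
      have hr1 : (θ/π)^p ≤ Aa s₁ θ ^ p := Real.rpow_le_rpow hθπ0.le hA1 hp.le
      have hr2 : (θ/π)^q ≤ Aa s₂ θ ^ q := Real.rpow_le_rpow hθπ0.le hA2 hq0.le
      have hd : 0 < (θ/π)^p * (θ/π)^q := by positivity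
      have hmul : (θ/π)^p * (θ/π)^q ≤ Aa s₁ θ ^ p * Aa s₂ θ ^ q :=
        mul_le_mul hr1 hr2 (Real.rpow_nonneg hθπ0.le q) (Real.rpow_nonneg (Aa_pos s₁ θ h10 h11).le p)
      calc g θ = (Aa s₁ θ ^ p * Aa s₂ θ ^ q)⁻¹ := one_div _
        _ ≤ ((θ/π)^p * (θ/π)^q)⁻¹ := inv_anti₀ hd hmul
        _ = π^(p+q) * θ^(-(p+q)) := by
            rw [← Real.rpow_add hθπ0, Real.div_rpow hθ0.le hπ.le,
              Real.rpow_neg hθ0.le]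
            have h2 : θ ^ (p+q) ≠ 0 := ne_of_gt (Real.rpow_pos_of_pos hθ0 (p+q))
            have h3 : π ^ (p+q) ≠ 0 := by positivity
            field_simp
    have hval2 : ∫ θ in u..π, π^(p+q) * θ^(-(p+q))
        = π^(p+q) * ((π^(-(p+q)+1) - u^(-(p+q)+1)) / (-(p+q)+1)) := by
      rw [intervalIntegral.integral_const_mul]
      rw [integral_rpow (Or.inr ⟨ne_of_lt (by linarith : -(p+q) < -1), hnot0⟩)]
    have hval2' : ∫ θ in u..π, π^(p+q) * θ^(-(p+q))
        ≤ π^(p+q) * (u^(-(p+q)+1) / (p+q-1)) := by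
      rw [hval2]
      apply mul_le_mul_of_nonneg_left ?_ (Real.rpow_nonneg hπ.le (p+q))
      have hc : (p+q-1 : ℝ) ≠ 0 := ne_of_gt hpq'
      have heq : (π^(-(p+q)+1) - u^(-(p+q)+1)) / (-(p+q)+1)
          = (u^(-(p+q)+1) - π^(-(p+q)+1)) / (p+q-1) := by
        rw [div_eq_div_iff (by linarith : (-(p+q)+1 : ℝ) ≠ 0) hc]
        ring
      rw [heq]
      have hπpow : 0 ≤ π^(-(p+q)+1) := Real.rpow_nonneg hπ.le _
      gcongr
      linarith
    have hsplit2 : ∫ θ in (0:ℝ)..π, g θ = (∫ θ in (0:ℝ)..u, g θ) + ∫ θ in u..π, g θ :=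
      (intervalIntegral.integral_add_adjacent_intervals (hgi 0 u) (hgi u π)).symm
    have halg1 : (t^(-p) * π^q) * (u^(-q+1) / (-q+1)) = π * (t^(p+q-1))⁻¹ / (1-q) := by
      have k1 : (π*t)^(-q+1) = π^(-q+1) * t^(-q+1) := Real.mul_rpow hπ.le ht.le
      have k2 : π^q * π^(-q+1) = π := by
        rw [← Real.rpow_add hπ, show (q + (-q+1) : ℝ) = 1 by ring, Real.rpow_one]
      have k3 : t^(-p) * t^(-q+1) = (t^(p+q-1))⁻¹ := by
        rw [← Real.rpow_add ht, show (-p + (-q+1) : ℝ) = -(p+q-1) by ring,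
          Real.rpow_neg ht.le]
      calc (t^(-p) * π^q) * (u^(-q+1) / (-q+1))
          = (π^q * π^(-q+1)) * (t^(-p) * t^(-q+1)) / (-q+1) := by rw [hudef, k1]; ring
        _ = π * (t^(p+q-1))⁻¹ / (-q+1) := by rw [k2, k3]
        _ = π * (t^(p+q-1))⁻¹ / (1-q) := by ring_nf
    have halg2 : π^(p+q) * (u^(-(p+q)+1) / (p+q-1)) = π * (t^(p+q-1))⁻¹ / (p+q-1) := by
      have k1 : (π*t)^(-(p+q)+1) = π^(-(p+q)+1) * t^(-(p+q)+1) := Real.mul_rpow hπ.le ht.le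
      have k2 : π^(p+q) * π^(-(p+q)+1) = π := by
        rw [← Real.rpow_add hπ, show ((p+q) + (-(p+q)+1) : ℝ) = 1 by ring, Real.rpow_one]
      have k3 : t^(-(p+q)+1) = (t^(p+q-1))⁻¹ := by
        rw [show (-(p+q)+1 : ℝ) = -(p+q-1) by ring, Real.rpow_neg ht.le]
      calc π^(p+q) * (u^(-(p+q)+1) / (p+q-1))
          = (π^(p+q) * π^(-(p+q)+1)) * t^(-(p+q)+1) / (p+q-1) := by rw [hudef, k1]; ring
        _ = π * (t^(p+q-1))⁻¹ / (p+q-1) := by rw [k2, k3]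
    calc ∫ θ in (0:ℝ)..(2*π), g θ = 2 * ∫ θ in (0:ℝ)..π, g θ := hsym
      _ = 2 * ((∫ θ in (0:ℝ)..u, g θ) + ∫ θ in u..π, g θ) := by rw [hsplit2]
      _ ≤ 2 * ((t^(-p) * π^q) * (u^(-q+1) / (-q+1)) + π^(p+q) * (u^(-(p+q)+1) / (p+q-1))) := by
          have e1 := hP1.trans_eq hval1
          have e2 := hP2.trans hval2'
          linarith
      _ = 2 * π * (1/(1-q) + 1/(p+q-1)) * (1 / t^(p+q-1)) := by
          rw [halg1, halg2]
          ring
end
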